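/- arXiv:2303.16420 — 7 statements merged into one kernel-verified Lean document; each statement's English description precedes it below -/
import Mathlib

section
/- Let u : T → [0,1] be continuous, componentwise non-decreasing (u(x,y) ≤ u(x′,y′) whenever x ≤ x′ and y ≤ y′), normalized by u(x₁,y₁) = 0 and u(x_{N₁},y_{N₂}) = 1, and satisfy the conservative property. Suppose moreover that for given real coefficients a^l_{i,j} and constants c_l (l = 1,…,M) one has Σ_{i=1}^{N₁} Σ_{j=1}^{N₂} a^l_{i,j} u(x_i,y_j) ≤ c_l for every l. Let u_N be the Type-1 piecewise linear function built from the grid values u_{i,j} := u(x_i,y_j). Then u_N is continuous on T, componentwise non-decreasing, takes values in [0,1], satisfies u_N(x₁,y₁) = 0 and u_N(x_{N₁},y_{N₂}) = 1, satisfies the conservative property, and satisfies Σ_{i,j} a^l_{i,j} u_N(x_i,y_j) ≤ c_l for every l = 1,…,M. (Proposition 3.1 of the paper, in the case where each ψ_l is a simple function constant on the cells, so that the Lebesgue–Stieltjes constraint ∫_T u dψ_l ≤ c_l reduces to the displayed linear inequality in gridpoint values.) -/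
set_option maxHeartbeats 1000000


open Finset Set
open scoped Classical

noncomputable section

/-- Lower-triangle linear piece of the Type-1 PLA over cell `(i,j)`. -/
def u1l (x y : ℕ → ℝ) (u : ℕ → ℕ → ℝ) (i j : ℕ) (p q : ℝ) : ℝ :=
  ((x (i + 1) - p) / (x (i + 1) - x i)) * u i j
    + ((p - x i) / (x (i + 1) - x i) - (q - y j) / (y (j + 1) - y j)) * u (i + 1) j
    + ((q - y j) / (y (j + 1) - y j)) * u (i + 1) (j + 1)

/-- Upper-triangle linear piece of the Type-1 PLA over cell `(i,j)`. -/
def u1u (x y : ℕ → ℝ) (u : ℕ → ℕ → ℝ) (i j : ℕ) (p q : ℝ) : ℝ :=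
  ((y (j + 1) - q) / (y (j + 1) - y j)) * u i j
    + ((q - y j) / (y (j + 1) - y j) - (p - x i) / (x (i + 1) - x i)) * u i (j + 1)
    + ((p - x i) / (x (i + 1) - x i)) * u (i + 1) (j + 1)

/-- Membership in the half-open interval `X_i` (closed at the left end for `i = 1`). -/
def memX (x : ℕ → ℝ) (i : ℕ) (p : ℝ) : Prop :=
  if i = 1 then x 1 ≤ p ∧ p ≤ x 2 else x i < p ∧ p ≤ x (i + 1)

/-- Membership in the cell `T_{i,j} = X_i × Y_j`. -/
def memCell (x y : ℕ → ℝ) (i j : ℕ) (p q : ℝ) : Prop :=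
  memX x i p ∧ memX y j q

/-- The Type-1 piecewise linear function built from the grid values `u i j`. -/
def uPL (N₁ N₂ : ℕ) (x y : ℕ → ℝ) (u : ℕ → ℕ → ℝ) (p q : ℝ) : ℝ :=
  ∑ i ∈ Finset.Icc 1 (N₁ - 1), ∑ j ∈ Finset.Icc 1 (N₂ - 1),
    if memCell x y i j p q then
      (if (q - y j) * (x (i + 1) - x i) ≤ (p - x i) * (y (j + 1) - y j)
        then u1l x y u i j p q else u1u x y u i j p q)
    else 0

/-- weak monotonicity of the grid -/
lemma xmono (N : ℕ) (x : ℕ → ℝ) (hx : ∀ i, 1 ≤ i → i < N → x i < x (i + 1))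
    {i i' : ℕ} (h1 : 1 ≤ i) (h2 : i ≤ i') (h3 : i' ≤ N) : x i ≤ x i' := by
  induction i' with
  | zero => omega
  | succ k ih =>
    rcases Nat.lt_or_ge i (k+1) with h | h
    · have hk : x i ≤ x k := ih (by omega) (by omega)
      have : x k < x (k+1) := hx k (by omega) (by omega)
      linarith
    · have : i = k + 1 := by omega
      simp [this]

lemma memX_exists (x : ℕ → ℝ) {p : ℝ} :
    ∀ k, 2 ≤ k → x 1 ≤ p → p ≤ x k → ∃ i, 1 ≤ i ∧ i + 1 ≤ k ∧ memX x i p := by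
  intro k
  induction k with
  | zero => omega
  | succ n ih =>
    intro hk h1 h2
    rcases Nat.lt_or_ge n 2 with hn | hn
    · have : n = 1 := by omega
      subst this
      exact ⟨1, le_refl _, le_refl _, by simp [memX]; exact ⟨h1, h2⟩⟩
    · rcases le_or_gt p (x n) with h | h
      · obtain ⟨i, hi1, hi2, hi3⟩ := ih hn h1 h
        exact ⟨i, hi1, by omega, hi3⟩
      · exact ⟨n, by omega, le_refl _, by
          simp only [memX, if_neg (by omega : ¬ n = 1)]; exact ⟨h, h2⟩⟩

lemma memX_closed (x : ℕ → ℝ) {i : ℕ} {p : ℝ} (h : memX x i p) :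
    x i ≤ p ∧ p ≤ x (i + 1) := by
  by_cases hi : i = 1
  · subst hi; simpa [memX] using h
  · simp only [memX, if_neg hi] at h
    exact ⟨h.1.le, h.2⟩

lemma memX_unique (N : ℕ) (x : ℕ → ℝ) (hx : ∀ i, 1 ≤ i → i < N → x i < x (i + 1))
    {i i' : ℕ} {p : ℝ} (hi1 : 1 ≤ i) (hi2 : i + 1 ≤ N) (hi1' : 1 ≤ i') (hi2' : i' + 1 ≤ N)
    (h : memX x i p) (h' : memX x i' p) : i = i' := by
  by_contra hne
  wlog hlt : i < i' generalizing i i'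
  · exact this hi1' hi2' hi1 hi2 h' h (by omega) (by omega)
  have h2 : p ≤ x (i + 1) := (memX_closed x h).2
  have h3 : x i' < p := by
    have : ¬ i' = 1 := by omega
    simpa [memX, this] using (by simp only [memX, if_neg this] at h'; exact h'.1)
  have : x (i + 1) ≤ x i' := xmono N x hx (by omega) (by omega) (by omega)
  linarith

lemma memX_cases (N : ℕ) (x : ℕ → ℝ) (hN : 2 ≤ N)
    (hx : ∀ i, 1 ≤ i → i < N → x i < x (i + 1))
    {i : ℕ} {p : ℝ} (hi1 : 1 ≤ i) (hi2 : i + 1 ≤ N) (h1 : x i ≤ p) (h2 : p ≤ x (i + 1)) :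
    memX x i p ∨ (p = x i ∧ 2 ≤ i ∧ memX x (i - 1) p) := by
  by_cases hi : i = 1
  · left; subst hi; simp [memX]; exact ⟨h1, h2⟩
  · rcases lt_or_eq_of_le h1 with h | h
    · left; simp only [memX, if_neg hi]; exact ⟨h, h2⟩
    · right
      refine ⟨h.symm, by omega, ?_⟩
      by_cases hi' : i - 1 = 1
      · have : i = 2 := by omega
        subst this
        simp only [memX, if_pos hi']
        constructor
        · have := hx 1 le_rfl (by omega); linarith
        · simpa [← h] using le_refl p
      · simp only [memX, if_neg hi']
        have hxx : x (i - 1) < x (i - 1 + 1) := hx (i-1) (by omega) (by omega)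
        have : i - 1 + 1 = i := by omega
        rw [this] at hxx
        constructor
        · linarith [h.symm ▸ hxx]
        · rw [this, ← h]

lemma uPL_eq_cell (N₁ N₂ : ℕ) (x y : ℕ → ℝ) (u : ℕ → ℕ → ℝ)
    (hx : ∀ i, 1 ≤ i → i < N₁ → x i < x (i + 1))
    (hy : ∀ j, 1 ≤ j → j < N₂ → y j < y (j + 1))
    {i₀ j₀ : ℕ} {p q : ℝ} (hi1 : 1 ≤ i₀) (hi2 : i₀ + 1 ≤ N₁) (hj1 : 1 ≤ j₀) (hj2 : j₀ + 1 ≤ N₂)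
    (hm : memCell x y i₀ j₀ p q) :
    uPL N₁ N₂ x y u p q =
      (if (q - y j₀) * (x (i₀ + 1) - x i₀) ≤ (p - x i₀) * (y (j₀ + 1) - y j₀)
        then u1l x y u i₀ j₀ p q else u1u x y u i₀ j₀ p q) := by
  unfold uPL
  rw [Finset.sum_eq_single_of_mem i₀ (by simp [Finset.mem_Icc]; omega)]
  · rw [Finset.sum_eq_single_of_mem j₀ (by simp [Finset.mem_Icc]; omega)]
    · rw [if_pos hm]
    · intro j hj hne
      rw [if_neg]
      intro hmem
      exact hne (memX_unique N₂ y hy (by simp [Finset.mem_Icc] at hj; omega)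
        (by simp [Finset.mem_Icc] at hj; omega) hj1 hj2 hmem.2 hm.2)
  · intro i hi hne
    apply Finset.sum_eq_zero
    intro j _
    rw [if_neg]
    intro hmem
    exact hne (memX_unique N₁ x hx (by simp [Finset.mem_Icc] at hi; omega)
      (by simp [Finset.mem_Icc] at hi; omega) hi1 hi2 hmem.1 hm.1)

lemma u1l_sub_u1u (x y : ℕ → ℝ) (u : ℕ → ℕ → ℝ) (i j : ℕ) (p q : ℝ)
    (hh : x (i + 1) - x i ≠ 0) (hk : y (j + 1) - y j ≠ 0) :
    u1l x y u i j p q - u1u x y u i j p q =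
      ((p - x i) / (x (i + 1) - x i) - (q - y j) / (y (j + 1) - y j)) *
        (u (i + 1) j + u i (j + 1) - u i j - u (i + 1) (j + 1)) := by
  unfold u1l u1u
  field_simp
  ring

lemma uPL_eq_max (N₁ N₂ : ℕ) (x y : ℕ → ℝ) (u : ℕ → ℕ → ℝ)
    (hN₁ : 2 ≤ N₁) (hN₂ : 2 ≤ N₂)
    (hx : ∀ i, 1 ≤ i → i < N₁ → x i < x (i + 1))
    (hy : ∀ j, 1 ≤ j → j < N₂ → y j < y (j + 1))
    (hD : ∀ i j, 1 ≤ i → i + 1 ≤ N₁ → 1 ≤ j → j + 1 ≤ N₂ →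
      u i j + u (i + 1) (j + 1) ≤ u i (j + 1) + u (i + 1) j)
    {i j : ℕ} {p q : ℝ} (hi1 : 1 ≤ i) (hi2 : i + 1 ≤ N₁) (hj1 : 1 ≤ j) (hj2 : j + 1 ≤ N₂)
    (hp1 : x i ≤ p) (hp2 : p ≤ x (i + 1)) (hq1 : y j ≤ q) (hq2 : q ≤ y (j + 1)) :
    uPL N₁ N₂ x y u p q = max (u1l x y u i j p q) (u1u x y u i j p q) := by
  have hh : (0:ℝ) < x (i + 1) - x i := by linarith [hx i hi1 (by omega)]
  have hk : (0:ℝ) < y (j + 1) - y j := by linarith [hy j hj1 (by omega)]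
  have hD0 : (0:ℝ) ≤ u (i + 1) j + u i (j + 1) - u i j - u (i + 1) (j + 1) := by
    linarith [hD i j hi1 hi2 hj1 hj2]
  have hid := u1l_sub_u1u x y u i j p q (by linarith) (by linarith)
  have hhne : x (i + 1) - x i ≠ 0 := ne_of_gt hh
  have hkne : y (j + 1) - y j ≠ 0 := ne_of_gt hk
  rcases memX_cases N₁ x hN₁ hx hi1 hi2 hp1 hp2 with hmp | ⟨hpe, hi2', hmp⟩ <;>
    rcases memX_cases N₂ y hN₂ hy hj1 hj2 hq1 hq2 with hmq | ⟨hqe, hj2', hmq⟩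
  · -- interior cell (i, j)
    rw [uPL_eq_cell N₁ N₂ x y u hx hy hi1 hi2 hj1 hj2 ⟨hmp, hmq⟩]
    split_ifs with hcond
    · symm; apply max_eq_left
      have hst : (0:ℝ) ≤ (p - x i) / (x (i + 1) - x i) - (q - y j) / (y (j + 1) - y j) := by
        rw [sub_nonneg, div_le_div_iff₀ hk hh]
        linarith
      nlinarith [mul_nonneg hst hD0]
    · symm; apply max_eq_right
      have hst : (p - x i) / (x (i + 1) - x i) - (q - y j) / (y (j + 1) - y j) ≤ 0 := by
        rw [sub_nonpos, div_le_div_iff₀ hh hk]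
        nlinarith [not_le.mp hcond]
      nlinarith [mul_nonpos_of_nonpos_of_nonneg hst hD0]
  · -- p interior, q = y j : cell (i, j-1)
    subst hqe
    have hk' : (0:ℝ) < y j - y (j - 1) := by
      have := hy (j - 1) (by omega) (by omega)
      rw [show j - 1 + 1 = j from by omega] at this
      linarith
    have hkne' : y j - y (j - 1) ≠ 0 := ne_of_gt hk'
    rw [uPL_eq_cell N₁ N₂ x y u hx hy hi1 hi2 (by omega) (by omega) ⟨hmp, hmq⟩,
      show j - 1 + 1 = j from by omega]
    have ht0 : (y j - y j) / (y (j + 1) - y j) = 0 := by simp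
    split_ifs with hcond
    · -- forces p = x (i+1)
      have hpe : p = x (i + 1) := by nlinarith
      subst hpe
      rw [ht0] at hid
      rw [max_eq_left (by nlinarith [mul_nonneg (div_nonneg (by linarith : (0:ℝ) ≤ x (i+1) - x i) hh.le) hD0])]
      unfold u1l
      rw [show j - 1 + 1 = j from by omega]
      simp only [sub_self, zero_div, zero_mul, zero_sub, sub_zero, zero_add, add_zero]
      field_simp
      ring
    · rw [ht0] at hid
      rw [max_eq_left (by nlinarith [mul_nonneg (div_nonneg (by linarith : (0:ℝ) ≤ p - x i) hh.le) hD0])]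
      unfold u1u u1l
      rw [show j - 1 + 1 = j from by omega]
      simp only [sub_self, zero_div, zero_mul, zero_sub, sub_zero, zero_add, add_zero]
      field_simp
      ring
  · -- p = x i, q interior : cell (i-1, j)
    subst hpe
    have hh' : (0:ℝ) < x i - x (i - 1) := by
      have := hx (i - 1) (by omega) (by omega)
      rw [show i - 1 + 1 = i from by omega] at this
      linarith
    have hhne' : x i - x (i - 1) ≠ 0 := ne_of_gt hh'
    rw [uPL_eq_cell N₁ N₂ x y u hx hy (by omega) (by omega) hj1 hj2 ⟨hmp, hmq⟩,
      show i - 1 + 1 = i from by omega]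
    have hs0 : (x i - x i) / (x (i + 1) - x i) = 0 := by simp
    rw [if_pos (by nlinarith)]
    rw [hs0] at hid
    rw [max_eq_right (by nlinarith [mul_nonneg (div_nonneg (by linarith : (0:ℝ) ≤ q - y j) hk.le) hD0])]
    unfold u1l u1u
    rw [show i - 1 + 1 = i from by omega]
    simp only [sub_self, zero_div, zero_mul, zero_sub, sub_zero, zero_add, add_zero]
    field_simp
    ring
  · -- p = x i, q = y j : cell (i-1, j-1)
    subst hpe; subst hqe
    have hh' : (0:ℝ) < x i - x (i - 1) := by
      have := hx (i - 1) (by omega) (by omega)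
      rw [show i - 1 + 1 = i from by omega] at this
      linarith
    have hk' : (0:ℝ) < y j - y (j - 1) := by
      have := hy (j - 1) (by omega) (by omega)
      rw [show j - 1 + 1 = j from by omega] at this
      linarith
    rw [uPL_eq_cell N₁ N₂ x y u hx hy (by omega) (by omega) (by omega) (by omega) ⟨hmp, hmq⟩,
      show i - 1 + 1 = i from by omega, show j - 1 + 1 = j from by omega]
    rw [if_pos (by nlinarith)]
    have e1 : u1l x y u i j (x i) (y j) = u i j := by
      unfold u1l
      simp only [sub_self, zero_div, zero_mul, zero_sub, sub_zero, zero_add, add_zero]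
      field_simp
    have e2 : u1u x y u i j (x i) (y j) = u i j := by
      unfold u1u
      simp only [sub_self, zero_div, zero_mul, zero_sub, sub_zero, zero_add, add_zero]
      field_simp
    rw [e1, e2, max_self]
    unfold u1l
    rw [show i - 1 + 1 = i from by omega, show j - 1 + 1 = j from by omega]
    simp only [sub_self, zero_div, zero_mul, zero_sub, sub_zero, zero_add, add_zero]
    field_simp
    ring


lemma uPL_grid (N₁ N₂ : ℕ) (x y : ℕ → ℝ) (u : ℕ → ℕ → ℝ)
    (hN₁ : 2 ≤ N₁) (hN₂ : 2 ≤ N₂)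
    (hx : ∀ i, 1 ≤ i → i < N₁ → x i < x (i + 1))
    (hy : ∀ j, 1 ≤ j → j < N₂ → y j < y (j + 1))
    (hD : ∀ i j, 1 ≤ i → i + 1 ≤ N₁ → 1 ≤ j → j + 1 ≤ N₂ →
      u i j + u (i + 1) (j + 1) ≤ u i (j + 1) + u (i + 1) j)
    {i j : ℕ} (hi1 : 1 ≤ i) (hi2 : i ≤ N₁) (hj1 : 1 ≤ j) (hj2 : j ≤ N₂) :
    uPL N₁ N₂ x y u (x i) (y j) = u i j := by
  rcases Nat.lt_or_ge i N₁ with hiN | hiN <;> rcases Nat.lt_or_ge j N₂ with hjN | hjN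
  · -- i, j small: cell (i, j)
    have hh : (0:ℝ) < x (i + 1) - x i := by linarith [hx i hi1 hiN]
    have hk : (0:ℝ) < y (j + 1) - y j := by linarith [hy j hj1 hjN]
    rw [uPL_eq_max N₁ N₂ x y u hN₁ hN₂ hx hy hD hi1 (by omega) hj1 (by omega)
      le_rfl (by linarith) le_rfl (by linarith)]
    have e1 : u1l x y u i j (x i) (y j) = u i j := by
      unfold u1l
      simp only [sub_self, zero_div, zero_mul, zero_sub, sub_zero, zero_add, add_zero]
      field_simp
    have e2 : u1u x y u i j (x i) (y j) = u i j := by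
      unfold u1u
      simp only [sub_self, zero_div, zero_mul, zero_sub, sub_zero, zero_add, add_zero]
      field_simp
    rw [e1, e2, max_self]
  · -- i small, j = N₂: cell (i, N₂ - 1)
    have hjE : j = N₂ := by omega
    subst hjE
    have hh : (0:ℝ) < x (i + 1) - x i := by linarith [hx i hi1 hiN]
    have hk : (0:ℝ) < y j - y (j - 1) := by
      have := hy (j - 1) (by omega) (by omega)
      rw [show j - 1 + 1 = j from by omega] at this; linarith
    have key := uPL_eq_max N₁ j x y u hN₁ hN₂ hx hy hD hi1 (by omega)
      (show 1 ≤ j - 1 by omega) (show j - 1 + 1 ≤ j by omega)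
      (le_refl (x i)) (by linarith) (p := x i) (q := y j)
      (by linarith)
      (by rw [show j - 1 + 1 = j from by omega])
    rw [key]
    have hid := u1l_sub_u1u x y u i (j - 1) (x i) (y j) (ne_of_gt hh)
      (by rw [show j - 1 + 1 = j from by omega]; exact ne_of_gt hk)
    rw [show j - 1 + 1 = j from by omega] at hid
    have ht1 : (y j - y (j - 1)) / (y j - y (j - 1)) = 1 := div_self (ne_of_gt hk)
    have hs0 : (x i - x i) / (x (i + 1) - x i) = 0 := by simp
    rw [ht1, hs0] at hid
    have hD0 : (0:ℝ) ≤ u (i + 1) (j - 1) + u i j - u i (j - 1) - u (i + 1) j := by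
      have := hD i (j - 1) hi1 (by omega) (by omega) (by omega)
      rw [show j - 1 + 1 = j from by omega] at this; linarith
    rw [max_eq_right (by nlinarith)]
    unfold u1u
    rw [show j - 1 + 1 = j from by omega]
    simp only [sub_self, zero_div, zero_mul, zero_sub, sub_zero, zero_add, add_zero]
    field_simp
  · -- i = N₁, j small: cell (N₁ - 1, j)
    have hiE : i = N₁ := by omega
    subst hiE
    have hk : (0:ℝ) < y (j + 1) - y j := by linarith [hy j hj1 hjN]
    have hh : (0:ℝ) < x i - x (i - 1) := by
      have := hx (i - 1) (by omega) (by omega)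
      rw [show i - 1 + 1 = i from by omega] at this; linarith
    have key := uPL_eq_max i N₂ x y u hN₁ hN₂ hx hy hD
      (show 1 ≤ i - 1 by omega) (show i - 1 + 1 ≤ i by omega) hj1 (by omega)
      (p := x i) (q := y j) (by linarith) (by rw [show i - 1 + 1 = i from by omega])
      (le_refl (y j)) (by linarith)
    rw [key]
    have hid := u1l_sub_u1u x y u (i - 1) j (x i) (y j)
      (by rw [show i - 1 + 1 = i from by omega]; exact ne_of_gt hh) (ne_of_gt hk)
    rw [show i - 1 + 1 = i from by omega] at hid
    have hs1 : (x i - x (i - 1)) / (x i - x (i - 1)) = 1 := div_self (ne_of_gt hh)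
    have ht0 : (y j - y j) / (y (j + 1) - y j) = 0 := by simp
    rw [hs1, ht0] at hid
    have hD0 : (0:ℝ) ≤ u i j + u (i - 1) (j + 1) - u (i - 1) j - u i (j + 1) := by
      have := hD (i - 1) j (by omega) (by omega) hj1 (by omega)
      rw [show i - 1 + 1 = i from by omega] at this; linarith
    rw [max_eq_left (by nlinarith)]
    unfold u1l
    rw [show i - 1 + 1 = i from by omega]
    simp only [sub_self, zero_div, zero_mul, zero_sub, sub_zero, zero_add, add_zero]
    field_simp
  · -- i = N₁, j = N₂: cell (N₁ - 1, N₂ - 1)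
    have hiE : i = N₁ := by omega
    have hjE : j = N₂ := by omega
    subst hiE; subst hjE
    have hh : (0:ℝ) < x i - x (i - 1) := by
      have := hx (i - 1) (by omega) (by omega)
      rw [show i - 1 + 1 = i from by omega] at this; linarith
    have hk : (0:ℝ) < y j - y (j - 1) := by
      have := hy (j - 1) (by omega) (by omega)
      rw [show j - 1 + 1 = j from by omega] at this; linarith
    have key := uPL_eq_max i j x y u hN₁ hN₂ hx hy hD
      (show 1 ≤ i - 1 by omega) (show i - 1 + 1 ≤ i by omega)
      (show 1 ≤ j - 1 by omega) (show j - 1 + 1 ≤ j by omega)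
      (p := x i) (q := y j) (by linarith) (by rw [show i - 1 + 1 = i from by omega])
      (by linarith) (by rw [show j - 1 + 1 = j from by omega])
    rw [key]
    have e1 : u1l x y u (i - 1) (j - 1) (x i) (y j) = u i j := by
      unfold u1l
      rw [show i - 1 + 1 = i from by omega, show j - 1 + 1 = j from by omega]
      simp only [sub_self, zero_div, zero_mul, zero_sub, sub_zero, zero_add, add_zero]
      rw [div_self (ne_of_gt hk), div_self (ne_of_gt hh)]
      ring
    have e2 : u1u x y u (i - 1) (j - 1) (x i) (y j) = u i j := by
      unfold u1u
      rw [show i - 1 + 1 = i from by omega, show j - 1 + 1 = j from by omega]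
      simp only [sub_self, zero_div, zero_mul, zero_sub, sub_zero, zero_add, add_zero]
      rw [div_self (ne_of_gt hk), div_self (ne_of_gt hh)]
      ring
    rw [e1, e2, max_self]


lemma u1l_mono_p (x y : ℕ → ℝ) (u : ℕ → ℕ → ℝ) (i j : ℕ) {p p' q : ℝ}
    (hh : (0:ℝ) < x (i + 1) - x i) (hm : u i j ≤ u (i + 1) j) (hpp : p ≤ p') :
    u1l x y u i j p q ≤ u1l x y u i j p' q := by
  have key : u1l x y u i j p' q - u1l x y u i j p q =
      ((p' - p) / (x (i + 1) - x i)) * (u (i + 1) j - u i j) := by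
    unfold u1l
    field_simp
    ring
  nlinarith [mul_nonneg (div_nonneg (by linarith : (0:ℝ) ≤ p' - p) hh.le)
    (by linarith : (0:ℝ) ≤ u (i + 1) j - u i j)]

lemma u1u_mono_p (x y : ℕ → ℝ) (u : ℕ → ℕ → ℝ) (i j : ℕ) {p p' q : ℝ}
    (hh : (0:ℝ) < x (i + 1) - x i) (hm : u i (j + 1) ≤ u (i + 1) (j + 1)) (hpp : p ≤ p') :
    u1u x y u i j p q ≤ u1u x y u i j p' q := by
  have key : u1u x y u i j p' q - u1u x y u i j p q =
      ((p' - p) / (x (i + 1) - x i)) * (u (i + 1) (j + 1) - u i (j + 1)) := by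
    unfold u1u
    field_simp
    ring
  nlinarith [mul_nonneg (div_nonneg (by linarith : (0:ℝ) ≤ p' - p) hh.le)
    (by linarith : (0:ℝ) ≤ u (i + 1) (j + 1) - u i (j + 1))]

lemma u1l_mono_q (x y : ℕ → ℝ) (u : ℕ → ℕ → ℝ) (i j : ℕ) {p q q' : ℝ}
    (hk : (0:ℝ) < y (j + 1) - y j) (hm : u (i + 1) j ≤ u (i + 1) (j + 1)) (hqq : q ≤ q') :
    u1l x y u i j p q ≤ u1l x y u i j p q' := by
  have key : u1l x y u i j p q' - u1l x y u i j p q =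
      ((q' - q) / (y (j + 1) - y j)) * (u (i + 1) (j + 1) - u (i + 1) j) := by
    unfold u1l
    field_simp
    ring
  nlinarith [mul_nonneg (div_nonneg (by linarith : (0:ℝ) ≤ q' - q) hk.le)
    (by linarith : (0:ℝ) ≤ u (i + 1) (j + 1) - u (i + 1) j)]

lemma u1u_mono_q (x y : ℕ → ℝ) (u : ℕ → ℕ → ℝ) (i j : ℕ) {p q q' : ℝ}
    (hk : (0:ℝ) < y (j + 1) - y j) (hm : u i j ≤ u i (j + 1)) (hqq : q ≤ q') :
    u1u x y u i j p q ≤ u1u x y u i j p q' := by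
  have key : u1u x y u i j p q' - u1u x y u i j p q =
      ((q' - q) / (y (j + 1) - y j)) * (u i (j + 1) - u i j) := by
    unfold u1u
    field_simp
    ring
  nlinarith [mul_nonneg (div_nonneg (by linarith : (0:ℝ) ≤ q' - q) hk.le)
    (by linarith : (0:ℝ) ≤ u i (j + 1) - u i j)]

lemma max4 {α β γ δ : ℝ} (h1 : α ≤ β) (h2 : γ ≤ δ) :
    max (α - γ) 0 + max (β - δ) 0 ≤ max (α - δ) 0 + max (β - γ) 0 := by
  simp only [max_def]
  split_ifs <;> linarith

lemma cell_max_eq (x y : ℕ → ℝ) (u : ℕ → ℕ → ℝ) (i j : ℕ) (p q : ℝ)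
    (hh : (0:ℝ) < x (i + 1) - x i) (hk : (0:ℝ) < y (j + 1) - y j)
    (hD0 : (0:ℝ) ≤ u (i + 1) j + u i (j + 1) - u i j - u (i + 1) (j + 1)) :
    max (u1l x y u i j p q) (u1u x y u i j p q) = u1u x y u i j p q +
      (u (i + 1) j + u i (j + 1) - u i j - u (i + 1) (j + 1)) *
        max ((p - x i) / (x (i + 1) - x i) - (q - y j) / (y (j + 1) - y j)) 0 := by
  have hid := u1l_sub_u1u x y u i j p q (ne_of_gt hh) (ne_of_gt hk)
  rcases le_total ((p - x i) / (x (i + 1) - x i) - (q - y j) / (y (j + 1) - y j)) 0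
      with he | he
  · rw [max_eq_right he, max_eq_right (by nlinarith [mul_nonpos_of_nonpos_of_nonneg he hD0])]
    ring
  · rw [max_eq_left he, max_eq_left (by nlinarith [mul_nonneg he hD0])]
    linarith [hid]

lemma cell_cons (x y : ℕ → ℝ) (u : ℕ → ℕ → ℝ) (i j : ℕ) {a b c d : ℝ}
    (hh : (0:ℝ) < x (i + 1) - x i) (hk : (0:ℝ) < y (j + 1) - y j)
    (hD0 : (0:ℝ) ≤ u (i + 1) j + u i (j + 1) - u i j - u (i + 1) (j + 1))
    (hab : a ≤ b) (hcd : c ≤ d) :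
    max (u1l x y u i j a c) (u1u x y u i j a c) + max (u1l x y u i j b d) (u1u x y u i j b d)
      ≤ max (u1l x y u i j a d) (u1u x y u i j a d)
        + max (u1l x y u i j b c) (u1u x y u i j b c) := by
  rw [cell_max_eq x y u i j a c hh hk hD0, cell_max_eq x y u i j b d hh hk hD0,
    cell_max_eq x y u i j a d hh hk hD0, cell_max_eq x y u i j b c hh hk hD0]
  have haff : u1u x y u i j a c + u1u x y u i j b d =
      u1u x y u i j a d + u1u x y u i j b c := by
    unfold u1u; ring
  have hmax : max ((a - x i) / (x (i + 1) - x i) - (c - y j) / (y (j + 1) - y j)) 0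
        + max ((b - x i) / (x (i + 1) - x i) - (d - y j) / (y (j + 1) - y j)) 0
      ≤ max ((a - x i) / (x (i + 1) - x i) - (d - y j) / (y (j + 1) - y j)) 0
        + max ((b - x i) / (x (i + 1) - x i) - (c - y j) / (y (j + 1) - y j)) 0 :=
    max4 (by gcongr) (by gcongr)
  nlinarith [mul_le_mul_of_nonneg_left hmax hD0]

lemma chain_mono (N : ℕ) (x : ℕ → ℝ) (hN : 1 ≤ N) (f : ℝ → ℝ)
    (hloc : ∀ i, 1 ≤ i → i + 1 ≤ N → ∀ p p', x i ≤ p → p ≤ p' → p' ≤ x (i + 1) → f p ≤ f p') :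
    ∀ p p', x 1 ≤ p → p ≤ p' → p' ≤ x N → f p ≤ f p' := by
  suffices h : ∀ k, 1 ≤ k → k ≤ N → ∀ p p', x 1 ≤ p → p ≤ p' → p' ≤ x k → f p ≤ f p' from
    h N hN le_rfl
  intro k
  induction k with
  | zero => omega
  | succ n ih =>
    intro _ hkN p p' h1 h2 h3
    rcases Nat.lt_or_ge n 1 with hn | hn
    · have hn0 : n = 0 := by omega
      subst hn0
      have : p = p' := le_antisymm h2 (h3.trans h1)
      rw [this]
    · rcases le_or_gt p' (x n) with h4 | h4
      · exact ih (by omega) (by omega) p p' h1 h2 h4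
      · rcases le_or_gt p (x n) with h5 | h5
        · exact le_trans (ih (by omega) (by omega) p (x n) h1 h5 le_rfl)
            (hloc n hn (by omega) (x n) p' le_rfl h4.le h3)
        · exact hloc n hn (by omega) p p' h5.le h2 h3


lemma cwa_biUnion {α β ι : Type*} [TopologicalSpace α] [TopologicalSpace β] {f : α → β} {z : α}
    (S : Finset ι) (s : ι → Set α) (h : ∀ i ∈ S, ContinuousWithinAt f (s i) z) :
    ContinuousWithinAt f (⋃ i ∈ S, s i) z := by
  classical
  induction S using Finset.induction with
  | empty =>
    simp only [Finset.notMem_empty, Set.iUnion_of_empty, Set.iUnion_empty]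
    unfold ContinuousWithinAt
    rw [nhdsWithin_empty]
    exact Filter.tendsto_bot
  | insert a S' hni ih =>
    rw [Finset.set_biUnion_insert]
    exact (h a (Finset.mem_insert_self a S')).union
      (ih fun i hi => h i (Finset.mem_insert_of_mem hi))

lemma cellF_cont (x y : ℕ → ℝ) (u : ℕ → ℕ → ℝ) (i j : ℕ) :
    Continuous (fun pq : ℝ × ℝ => max (u1l x y u i j pq.1 pq.2) (u1u x y u i j pq.1 pq.2)) := by
  unfold u1l u1u
  fun_prop


/-- Proposition 3.1 (simple-function case): the Type-1 PLA of a continuous, componentwise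
non-decreasing, normalized utility with the conservative property, satisfying linear gridpoint
constraints, inherits all of those properties. -/
theorem prop31_type1_PLA_preserves_properties
    (N₁ N₂ M : ℕ) (hN₁ : 2 ≤ N₁) (hN₂ : 2 ≤ N₂)
    (x y : ℕ → ℝ)
    (hx : ∀ i, 1 ≤ i → i < N₁ → x i < x (i + 1))
    (hy : ∀ j, 1 ≤ j → j < N₂ → y j < y (j + 1))
    (u : ℝ → ℝ → ℝ)
    (hcont : ContinuousOn (fun pq : ℝ × ℝ => u pq.1 pq.2)
      (Set.Icc (x 1) (x N₁) ×ˢ Set.Icc (y 1) (y N₂)))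
    (hmono : ∀ p p' q q', p ∈ Set.Icc (x 1) (x N₁) → p' ∈ Set.Icc (x 1) (x N₁) →
      q ∈ Set.Icc (y 1) (y N₂) → q' ∈ Set.Icc (y 1) (y N₂) →
      p ≤ p' → q ≤ q' → u p q ≤ u p' q')
    (hrange : ∀ p ∈ Set.Icc (x 1) (x N₁), ∀ q ∈ Set.Icc (y 1) (y N₂),
      u p q ∈ Set.Icc (0 : ℝ) 1)
    (hnorm0 : u (x 1) (y 1) = 0) (hnorm1 : u (x N₁) (y N₂) = 1)
    (hcons : ∀ a b c d : ℝ, x 1 ≤ a → a ≤ b → b ≤ x N₁ → y 1 ≤ c → c ≤ d → d ≤ y N₂ →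
      u a c + u b d ≤ u a d + u b c)
    (a : ℕ → ℕ → ℕ → ℝ) (c : ℕ → ℝ)
    (hlin : ∀ l ∈ Finset.Icc 1 M,
      ∑ i ∈ Finset.Icc 1 N₁, ∑ j ∈ Finset.Icc 1 N₂, a l i j * u (x i) (y j) ≤ c l) :
    let uN := uPL N₁ N₂ x y (fun i j => u (x i) (y j))
    ContinuousOn (fun pq : ℝ × ℝ => uN pq.1 pq.2)
        (Set.Icc (x 1) (x N₁) ×ˢ Set.Icc (y 1) (y N₂)) ∧
      (∀ p p' q q', p ∈ Set.Icc (x 1) (x N₁) → p' ∈ Set.Icc (x 1) (x N₁) →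
        q ∈ Set.Icc (y 1) (y N₂) → q' ∈ Set.Icc (y 1) (y N₂) →
        p ≤ p' → q ≤ q' → uN p q ≤ uN p' q') ∧
      (∀ p ∈ Set.Icc (x 1) (x N₁), ∀ q ∈ Set.Icc (y 1) (y N₂),
        uN p q ∈ Set.Icc (0 : ℝ) 1) ∧
      uN (x 1) (y 1) = 0 ∧ uN (x N₁) (y N₂) = 1 ∧
      (∀ a' b' c' d' : ℝ, x 1 ≤ a' → a' ≤ b' → b' ≤ x N₁ → y 1 ≤ c' → c' ≤ d' → d' ≤ y N₂ →
        uN a' c' + uN b' d' ≤ uN a' d' + uN b' c') ∧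
      (∀ l ∈ Finset.Icc 1 M,
        ∑ i ∈ Finset.Icc 1 N₁, ∑ j ∈ Finset.Icc 1 N₂, a l i j * uN (x i) (y j) ≤ c l) := by
  intro uN
  set U : ℕ → ℕ → ℝ := fun i j => u (x i) (y j) with hUdef
  have hxlo : ∀ i, 1 ≤ i → i ≤ N₁ → x 1 ≤ x i := fun i h1 h2 => xmono N₁ x hx le_rfl h1 h2
  have hxhi : ∀ i, 1 ≤ i → i ≤ N₁ → x i ≤ x N₁ := fun i h1 h2 => xmono N₁ x hx h1 h2 le_rfl
  have hylo : ∀ j, 1 ≤ j → j ≤ N₂ → y 1 ≤ y j := fun j h1 h2 => xmono N₂ y hy le_rfl h1 h2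
  have hyhi : ∀ j, 1 ≤ j → j ≤ N₂ → y j ≤ y N₂ := fun j h1 h2 => xmono N₂ y hy h1 h2 le_rfl
  have hD : ∀ i j, 1 ≤ i → i + 1 ≤ N₁ → 1 ≤ j → j + 1 ≤ N₂ →
      U i j + U (i + 1) (j + 1) ≤ U i (j + 1) + U (i + 1) j := by
    intro i j hi1 hi2 hj1 hj2
    exact hcons (x i) (x (i + 1)) (y j) (y (j + 1)) (hxlo i hi1 (by omega))
      (by linarith [hx i hi1 (by omega)]) (hxhi (i + 1) (by omega) hi2)
      (hylo j hj1 (by omega)) (by linarith [hy j hj1 (by omega)]) (hyhi (j + 1) (by omega) hj2)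
  have hUx : ∀ i j, 1 ≤ i → i + 1 ≤ N₁ → 1 ≤ j → j ≤ N₂ → U i j ≤ U (i + 1) j := by
    intro i j hi1 hi2 hj1 hj2
    exact hmono (x i) (x (i + 1)) (y j) (y j)
      ⟨hxlo i hi1 (by omega), hxhi i hi1 (by omega)⟩
      ⟨hxlo (i + 1) (by omega) hi2, hxhi (i + 1) (by omega) hi2⟩
      ⟨hylo j hj1 hj2, hyhi j hj1 hj2⟩ ⟨hylo j hj1 hj2, hyhi j hj1 hj2⟩
      (by linarith [hx i hi1 (by omega)]) le_rfl
  have hUy : ∀ i j, 1 ≤ i → i ≤ N₁ → 1 ≤ j → j + 1 ≤ N₂ → U i j ≤ U i (j + 1) := by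
    intro i j hi1 hi2 hj1 hj2
    exact hmono (x i) (x i) (y j) (y (j + 1))
      ⟨hxlo i hi1 hi2, hxhi i hi1 hi2⟩ ⟨hxlo i hi1 hi2, hxhi i hi1 hi2⟩
      ⟨hylo j hj1 (by omega), hyhi j hj1 (by omega)⟩
      ⟨hylo (j + 1) (by omega) hj2, hyhi (j + 1) (by omega) hj2⟩
      le_rfl (by linarith [hy j hj1 (by omega)])
  have hgrid : ∀ i j, 1 ≤ i → i ≤ N₁ → 1 ≤ j → j ≤ N₂ → uN (x i) (y j) = U i j :=
    fun i j hi1 hi2 hj1 hj2 => uPL_grid N₁ N₂ x y U hN₁ hN₂ hx hy hD hi1 hi2 hj1 hj2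
  -- monotonicity
  have monox : ∀ q, y 1 ≤ q → q ≤ y N₂ → ∀ p p', x 1 ≤ p → p ≤ p' → p' ≤ x N₁ →
      uN p q ≤ uN p' q := by
    intro q hq1 hq2
    obtain ⟨j, hj1, hj2, hmj⟩ := memX_exists y N₂ hN₂ hq1 hq2
    obtain ⟨hqj1, hqj2⟩ := memX_closed y hmj
    apply chain_mono N₁ x (by omega) (fun p => uN p q)
    intro i hi1 hi2 p p' hp1 hpp hp2
    have hh : (0:ℝ) < x (i + 1) - x i := by linarith [hx i hi1 (by omega)]
    show uPL N₁ N₂ x y U p q ≤ uPL N₁ N₂ x y U p' q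
    rw [uPL_eq_max N₁ N₂ x y U hN₁ hN₂ hx hy hD hi1 hi2 hj1 hj2 hp1 (hpp.trans hp2) hqj1 hqj2,
      uPL_eq_max N₁ N₂ x y U hN₁ hN₂ hx hy hD hi1 hi2 hj1 hj2 (hp1.trans hpp) hp2 hqj1 hqj2]
    exact max_le_max (u1l_mono_p x y U i j hh (hUx i j hi1 hi2 hj1 (by omega)) hpp)
      (u1u_mono_p x y U i j hh (hUx i (j + 1) hi1 hi2 (by omega) hj2) hpp)
  have monoy : ∀ p, x 1 ≤ p → p ≤ x N₁ → ∀ q q', y 1 ≤ q → q ≤ q' → q' ≤ y N₂ →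
      uN p q ≤ uN p q' := by
    intro p hp1 hp2
    obtain ⟨i, hi1, hi2, hmi⟩ := memX_exists x N₁ hN₁ hp1 hp2
    obtain ⟨hpi1, hpi2⟩ := memX_closed x hmi
    apply chain_mono N₂ y (by omega) (fun q => uN p q)
    intro j hj1 hj2 q q' hq1 hqq hq2
    have hk : (0:ℝ) < y (j + 1) - y j := by linarith [hy j hj1 (by omega)]
    show uPL N₁ N₂ x y U p q ≤ uPL N₁ N₂ x y U p q'
    rw [uPL_eq_max N₁ N₂ x y U hN₁ hN₂ hx hy hD hi1 hi2 hj1 hj2 hpi1 hpi2 hq1 (hqq.trans hq2),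
      uPL_eq_max N₁ N₂ x y U hN₁ hN₂ hx hy hD hi1 hi2 hj1 hj2 hpi1 hpi2 (hq1.trans hqq) hq2]
    exact max_le_max (u1l_mono_q x y U i j hk (hUy (i + 1) j (by omega) hi2 hj1 hj2) hqq)
      (u1u_mono_q x y U i j hk (hUy i j hi1 (by omega) hj1 hj2) hqq)
  have hmonoN : ∀ p p' q q', p ∈ Set.Icc (x 1) (x N₁) → p' ∈ Set.Icc (x 1) (x N₁) →
      q ∈ Set.Icc (y 1) (y N₂) → q' ∈ Set.Icc (y 1) (y N₂) →
      p ≤ p' → q ≤ q' → uN p q ≤ uN p' q' := by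
    intro p p' q q' hp hp' hq hq' hpp hqq
    exact le_trans (monox q hq.1 hq.2 p p' hp.1 hpp hp'.2)
      (monoy p' hp'.1 hp'.2 q q' hq.1 hqq hq'.2)
  -- normalization
  have h00 : uN (x 1) (y 1) = 0 := by
    rw [hgrid 1 1 le_rfl (by omega) le_rfl (by omega)]
    exact hnorm0
  have h11 : uN (x N₁) (y N₂) = 1 := by
    rw [hgrid N₁ N₂ (by omega) le_rfl (by omega) le_rfl]
    exact hnorm1
  -- conservative
  have hconsN : ∀ a' b' c' d' : ℝ, x 1 ≤ a' → a' ≤ b' → b' ≤ x N₁ →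
      y 1 ≤ c' → c' ≤ d' → d' ≤ y N₂ →
      uN a' c' + uN b' d' ≤ uN a' d' + uN b' c' := by
    intro A B C D' hA hAB hB hC hCD hD'
    have inner : ∀ i, 1 ≤ i → i + 1 ≤ N₁ → ∀ p p', x i ≤ p → p ≤ p' → p' ≤ x (i + 1) →
        uN p C - uN p D' ≤ uN p' C - uN p' D' := by
      intro i hi1 hi2 a b ha hab hb
      have hh : (0:ℝ) < x (i + 1) - x i := by linarith [hx i hi1 (by omega)]
      have key : uN a C - uN b C ≤ uN a D' - uN b D' := by
        apply chain_mono N₂ y (by omega) (fun t => uN a t - uN b t) ?_ C D' hC hCD hD'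
        intro j hj1 hj2 q q' hq1 hqq hq2
        have hk : (0:ℝ) < y (j + 1) - y j := by linarith [hy j hj1 (by omega)]
        show uPL N₁ N₂ x y U a q - uPL N₁ N₂ x y U b q ≤
          uPL N₁ N₂ x y U a q' - uPL N₁ N₂ x y U b q'
        rw [uPL_eq_max N₁ N₂ x y U hN₁ hN₂ hx hy hD hi1 hi2 hj1 hj2 ha (hab.trans hb) hq1
            (hqq.trans hq2),
          uPL_eq_max N₁ N₂ x y U hN₁ hN₂ hx hy hD hi1 hi2 hj1 hj2 (ha.trans hab) hb hq1
            (hqq.trans hq2),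
          uPL_eq_max N₁ N₂ x y U hN₁ hN₂ hx hy hD hi1 hi2 hj1 hj2 ha (hab.trans hb)
            (hq1.trans hqq) hq2,
          uPL_eq_max N₁ N₂ x y U hN₁ hN₂ hx hy hD hi1 hi2 hj1 hj2 (ha.trans hab) hb
            (hq1.trans hqq) hq2]
        have := cell_cons x y U i j hh hk
          (by linarith [hD i j hi1 hi2 hj1 hj2]) hab hqq
        linarith
      linarith
    have outer := chain_mono N₁ x (by omega) (fun t => uN t C - uN t D') inner A B hA hAB hB
    linarith
  -- range
  have hrangeN : ∀ p ∈ Set.Icc (x 1) (x N₁), ∀ q ∈ Set.Icc (y 1) (y N₂),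
      uN p q ∈ Set.Icc (0 : ℝ) 1 := by
    intro p hp q hq
    have hx1N : x 1 ≤ x N₁ := hxlo N₁ (by omega) le_rfl
    have hy1N : y 1 ≤ y N₂ := hylo N₂ (by omega) le_rfl
    constructor
    · rw [← h00]
      exact hmonoN (x 1) p (y 1) q ⟨le_rfl, hx1N⟩ hp ⟨le_rfl, hy1N⟩ hq hp.1 hq.1
    · rw [← h11]
      exact hmonoN p (x N₁) q (y N₂) hp ⟨hx1N, le_rfl⟩ hq ⟨hy1N, le_rfl⟩ hp.2 hq.2
  -- continuity
  have hcontN : ContinuousOn (fun pq : ℝ × ℝ => uN pq.1 pq.2)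
      (Set.Icc (x 1) (x N₁) ×ˢ Set.Icc (y 1) (y N₂)) := by
    intro z hz
    set S : Finset (ℕ × ℕ) := Finset.Icc 1 (N₁ - 1) ×ˢ Finset.Icc 1 (N₂ - 1) with hS
    set s : ℕ × ℕ → Set (ℝ × ℝ) :=
      fun ij => Set.Icc (x ij.1) (x (ij.1 + 1)) ×ˢ Set.Icc (y ij.2) (y (ij.2 + 1)) with hs
    have hsub : (Set.Icc (x 1) (x N₁) ×ˢ Set.Icc (y 1) (y N₂)) ⊆ ⋃ ij ∈ S, s ij := by
      rintro ⟨p, q⟩ ⟨hp, hq⟩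
      obtain ⟨i, hi1, hi2, hmi⟩ := memX_exists x N₁ hN₁ hp.1 hp.2
      obtain ⟨j, hj1, hj2, hmj⟩ := memX_exists y N₂ hN₂ hq.1 hq.2
      refine Set.mem_biUnion (show ((i, j) : ℕ × ℕ) ∈ S from ?_) ?_
      · simp only [hS, Finset.mem_product, Finset.mem_Icc]
        omega
      · exact ⟨memX_closed x hmi, memX_closed y hmj⟩
    refine ContinuousWithinAt.mono ?_ hsub
    apply cwa_biUnion
    rintro ⟨i, j⟩ hij
    have hij' : 1 ≤ i ∧ i + 1 ≤ N₁ ∧ 1 ≤ j ∧ j + 1 ≤ N₂ := by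
      simp only [hS, Finset.mem_product, Finset.mem_Icc] at hij
      omega
    by_cases hzm : z ∈ s (i, j)
    · have hconN : ContinuousOn (fun pq : ℝ × ℝ => uN pq.1 pq.2) (s (i, j)) := by
        apply ContinuousOn.congr ((cellF_cont x y U i j).continuousOn)
        rintro ⟨p, q⟩ ⟨hp, hq⟩
        exact uPL_eq_max N₁ N₂ x y U hN₁ hN₂ hx hy hD hij'.1 hij'.2.1 hij'.2.2.1 hij'.2.2.2
          hp.1 hp.2 hq.1 hq.2
      exact hconN z hzm
    · apply continuousWithinAt_of_notMem_closure
      rw [(isClosed_Icc.prod isClosed_Icc).closure_eq]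
      exact hzm
  -- linear constraints
  have hlinN : ∀ l ∈ Finset.Icc 1 M,
      ∑ i ∈ Finset.Icc 1 N₁, ∑ j ∈ Finset.Icc 1 N₂, a l i j * uN (x i) (y j) ≤ c l := by
    intro l hl
    have heq : ∑ i ∈ Finset.Icc 1 N₁, ∑ j ∈ Finset.Icc 1 N₂, a l i j * uN (x i) (y j) =
        ∑ i ∈ Finset.Icc 1 N₁, ∑ j ∈ Finset.Icc 1 N₂, a l i j * u (x i) (y j) := by
      apply Finset.sum_congr rfl
      intro i hi
      apply Finset.sum_congr rfl
      intro j hj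
      simp only [Finset.mem_Icc] at hi hj
      rw [hgrid i j hi.1 hi.2 hj.1 hj.2]
    rw [heq]
    exact hlin l hl
  exact ⟨hcontN, hmonoN, hrangeN, h00, h11, hconsN, hlinN⟩

end
end

section
/- Suppose the grid values satisfy the componentwise monotonicity conditions u_{i+1,j} ≥ u_{i,j} for all 1 ≤ i ≤ N₁−1, 1 ≤ j ≤ N₂, and u_{i,j+1} ≥ u_{i,j} for all 1 ≤ i ≤ N₁, 1 ≤ j ≤ N₂−1. Then the Type-1 piecewise linear function u_N is componentwise non-decreasing on T: for all (x,y), (x′,y′) ∈ T with x ≤ x′ and y ≤ y′ one has u_N(x,y) ≤ u_N(x′,y′). -/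
open Finset Set
open scoped Classical

noncomputable section

namespace T1

lemma chain_le (f : ℕ → ℝ) (N : ℕ) (h : ∀ k, 1 ≤ k → k < N → f k ≤ f (k + 1)) :
    ∀ m k, 1 ≤ k → k ≤ m → m ≤ N → f k ≤ f m := by
  intro m
  induction m with
  | zero => intro k hk hkm _; omega
  | succ n ih =>
    intro k hk hkm hmN
    rcases eq_or_lt_of_le hkm with hEq | hlt
    · rw [hEq]
    · exact (ih k hk (by omega) (by omega)).trans (h n (by omega) (by omega))

lemma memX_bounds {x : ℕ → ℝ} {i : ℕ} {p : ℝ} (h : memX x i p) :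
    x i ≤ p ∧ p ≤ x (i + 1) := by
  by_cases hi : i = 1
  · subst hi; unfold memX at h; rw [if_pos rfl] at h
    exact ⟨h.1, by norm_num; exact h.2⟩
  · unfold memX at h; rw [if_neg hi] at h; exact ⟨h.1.le, h.2⟩

lemma exists_memX {N : ℕ} {x : ℕ → ℝ} :
    ∀ n, 2 ≤ n → n ≤ N → ∀ p, x 1 ≤ p → p ≤ x n → ∃ i, 1 ≤ i ∧ i ≤ n - 1 ∧ memX x i p := by
  intro n
  induction n with
  | zero => omega
  | succ m ih =>
    intro h2 hN p hp1 hp2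
    rcases Nat.lt_or_ge m 2 with hm | hm
    · have hm1 : m = 1 := by omega
      subst hm1
      refine ⟨1, le_refl 1, by omega, ?_⟩
      unfold memX; rw [if_pos rfl]
      exact ⟨hp1, by norm_num at hp2 ⊢; exact hp2⟩
    · by_cases hple : p ≤ x m
      · obtain ⟨i, hA, hB, hC⟩ := ih hm (by omega) p hp1 hple
        exact ⟨i, hA, by omega, hC⟩
      · refine ⟨m, by omega, by omega, ?_⟩
        unfold memX; rw [if_neg (by omega)]
        exact ⟨lt_of_not_ge hple, hp2⟩

/-- If `p ≤ p'`, the cell index of `p` is at most that of `p'`. -/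
lemma memX_mono {N : ℕ} {x : ℕ → ℝ} (hx : ∀ k, 1 ≤ k → k < N → x k < x (k + 1))
    {i i' : ℕ} {p p' : ℝ} (hi1' : 1 ≤ i') (hi2 : i ≤ N - 1)
    (h : memX x i p) (h' : memX x i' p') (hpp : p ≤ p') : i ≤ i' := by
  by_contra hc
  push_neg at hc
  have hi2' : 2 ≤ i := by omega
  have hxl : x i < p := by
    unfold memX at h; rw [if_neg (by omega)] at h; exact h.1
  have hru : p' ≤ x (i' + 1) := (memX_bounds h').2
  have hch : x (i' + 1) ≤ x i :=
    chain_le x N (fun k hk hkN => (hx k hk hkN).le) i (i' + 1) (by omega) (by omega) (by omega)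
  linarith

lemma memX_unique {N : ℕ} {x : ℕ → ℝ} (hx : ∀ k, 1 ≤ k → k < N → x k < x (k + 1))
    {i i' : ℕ} {p : ℝ} (hi1 : 1 ≤ i) (hi2 : i ≤ N - 1) (hi1' : 1 ≤ i') (hi2' : i' ≤ N - 1)
    (h : memX x i p) (h' : memX x i' p) : i = i' :=
  le_antisymm (memX_mono hx hi1' hi2 h h' le_rfl) (memX_mono hx hi1 hi2' h' h le_rfl)

/- elementary monotonicity of the two linear pieces -/
lemma u1l_mono_p {x y : ℕ → ℝ} {u : ℕ → ℕ → ℝ} {i j : ℕ} {p p' q : ℝ}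
    (hdx : x i < x (i + 1)) (h10 : u i j ≤ u (i + 1) j) (hpp : p ≤ p') :
    u1l x y u i j p q ≤ u1l x y u i j p' q := by
  have key : u1l x y u i j p' q - u1l x y u i j p q
      = ((p' - p) / (x (i + 1) - x i)) * (u (i + 1) j - u i j) := by
    unfold u1l; ring
  have h0 : 0 ≤ ((p' - p) / (x (i + 1) - x i)) * (u (i + 1) j - u i j) :=
    mul_nonneg (div_nonneg (by linarith) (by linarith)) (by linarith)
  linarith

lemma u1u_mono_p {x y : ℕ → ℝ} {u : ℕ → ℕ → ℝ} {i j : ℕ} {p p' q : ℝ}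
    (hdx : x i < x (i + 1)) (h11 : u i (j + 1) ≤ u (i + 1) (j + 1)) (hpp : p ≤ p') :
    u1u x y u i j p q ≤ u1u x y u i j p' q := by
  have key : u1u x y u i j p' q - u1u x y u i j p q
      = ((p' - p) / (x (i + 1) - x i)) * (u (i + 1) (j + 1) - u i (j + 1)) := by
    unfold u1u; ring
  have h0 : 0 ≤ ((p' - p) / (x (i + 1) - x i)) * (u (i + 1) (j + 1) - u i (j + 1)) :=
    mul_nonneg (div_nonneg (by linarith) (by linarith)) (by linarith)
  linarith

lemma u1l_mono_q {x y : ℕ → ℝ} {u : ℕ → ℕ → ℝ} {i j : ℕ} {p q q' : ℝ}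
    (hdy : y j < y (j + 1)) (h : u (i + 1) j ≤ u (i + 1) (j + 1)) (hqq : q ≤ q') :
    u1l x y u i j p q ≤ u1l x y u i j p q' := by
  have key : u1l x y u i j p q' - u1l x y u i j p q
      = ((q' - q) / (y (j + 1) - y j)) * (u (i + 1) (j + 1) - u (i + 1) j) := by
    unfold u1l; ring
  have h0 : 0 ≤ ((q' - q) / (y (j + 1) - y j)) * (u (i + 1) (j + 1) - u (i + 1) j) :=
    mul_nonneg (div_nonneg (by linarith) (by linarith)) (by linarith)
  linarith

lemma u1u_mono_q {x y : ℕ → ℝ} {u : ℕ → ℕ → ℝ} {i j : ℕ} {p q q' : ℝ}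
    (hdy : y j < y (j + 1)) (h : u i j ≤ u i (j + 1)) (hqq : q ≤ q') :
    u1u x y u i j p q ≤ u1u x y u i j p q' := by
  have key : u1u x y u i j p q' - u1u x y u i j p q
      = ((q' - q) / (y (j + 1) - y j)) * (u i (j + 1) - u i j) := by
    unfold u1u; ring
  have h0 : 0 ≤ ((q' - q) / (y (j + 1) - y j)) * (u i (j + 1) - u i j) :=
    mul_nonneg (div_nonneg (by linarith) (by linarith)) (by linarith)
  linarith

/-- The two pieces agree on the diagonal. -/
lemma u1l_eq_u1u {x y : ℕ → ℝ} {u : ℕ → ℕ → ℝ} {i j : ℕ} {p q : ℝ}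
    (hdx : x i < x (i + 1)) (hdy : y j < y (j + 1))
    (h : (q - y j) * (x (i + 1) - x i) = (p - x i) * (y (j + 1) - y j)) :
    u1l x y u i j p q = u1u x y u i j p q := by
  have hdx' : x (i + 1) - x i ≠ 0 := by intro hz; nlinarith
  have hdy' : y (j + 1) - y j ≠ 0 := by intro hz; nlinarith
  have ha : (p - x i) / (x (i + 1) - x i) = (q - y j) / (y (j + 1) - y j) := by
    rw [div_eq_div_iff hdx' hdy']; linarith
  have h1 : (x (i + 1) - p) / (x (i + 1) - x i)
      = 1 - (p - x i) / (x (i + 1) - x i) := by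
    field_simp; ring
  have h2 : (y (j + 1) - q) / (y (j + 1) - y j)
      = 1 - (q - y j) / (y (j + 1) - y j) := by
    field_simp; ring
  unfold u1l u1u
  rw [h1, h2, ha]; ring

end T1

namespace T1

/-- Value of the PLA on cell `(i,j)`. -/
def cellVal (x y : ℕ → ℝ) (u : ℕ → ℕ → ℝ) (i j : ℕ) (p q : ℝ) : ℝ :=
  if (q - y j) * (x (i + 1) - x i) ≤ (p - x i) * (y (j + 1) - y j)
    then u1l x y u i j p q else u1u x y u i j p q

lemma cellVal_mono_p {x y : ℕ → ℝ} {u : ℕ → ℕ → ℝ} {i j : ℕ} {p p' q : ℝ}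
    (hdx : x i < x (i + 1)) (hdy : y j < y (j + 1))
    (h10 : u i j ≤ u (i + 1) j) (h11 : u i (j + 1) ≤ u (i + 1) (j + 1))
    (hpp : p ≤ p') :
    cellVal x y u i j p q ≤ cellVal x y u i j p' q := by
  unfold cellVal
  have hdy0 : (0:ℝ) < y (j + 1) - y j := by linarith
  by_cases hc : (q - y j) * (x (i + 1) - x i) ≤ (p - x i) * (y (j + 1) - y j)
  · have hc' : (q - y j) * (x (i + 1) - x i) ≤ (p' - x i) * (y (j + 1) - y j) := by nlinarith
    rw [if_pos hc, if_pos hc']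
    exact u1l_mono_p hdx h10 hpp
  · by_cases hc' : (q - y j) * (x (i + 1) - x i) ≤ (p' - x i) * (y (j + 1) - y j)
    · rw [if_neg hc, if_pos hc']
      set dx := x (i + 1) - x i with hdxdef
      set dy := y (j + 1) - y j with hdydef
      set ps := x i + (q - y j) * dx / dy with hps
      have hstar : (q - y j) * dx = (ps - x i) * dy := by
        rw [hps]; field_simp; ring
      push_neg at hc
      have hp1 : p ≤ ps := by nlinarith
      have hp2 : ps ≤ p' := by nlinarith
      calc u1u x y u i j p q ≤ u1u x y u i j ps q := u1u_mono_p hdx h11 hp1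
        _ = u1l x y u i j ps q := (u1l_eq_u1u hdx hdy hstar).symm
        _ ≤ u1l x y u i j p' q := u1l_mono_p hdx h10 hp2
    · rw [if_neg hc, if_neg hc']
      exact u1u_mono_p hdx h11 hpp

lemma cellVal_mono_q {x y : ℕ → ℝ} {u : ℕ → ℕ → ℝ} {i j : ℕ} {p q q' : ℝ}
    (hdx : x i < x (i + 1)) (hdy : y j < y (j + 1))
    (h00 : u i j ≤ u i (j + 1)) (h10 : u (i + 1) j ≤ u (i + 1) (j + 1))
    (hqq : q ≤ q') :
    cellVal x y u i j p q ≤ cellVal x y u i j p q' := by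
  unfold cellVal
  have hdx0 : (0:ℝ) < x (i + 1) - x i := by linarith
  by_cases hc' : (q' - y j) * (x (i + 1) - x i) ≤ (p - x i) * (y (j + 1) - y j)
  · have hc : (q - y j) * (x (i + 1) - x i) ≤ (p - x i) * (y (j + 1) - y j) := by nlinarith
    rw [if_pos hc, if_pos hc']
    exact u1l_mono_q hdy h10 hqq
  · by_cases hc : (q - y j) * (x (i + 1) - x i) ≤ (p - x i) * (y (j + 1) - y j)
    · rw [if_pos hc, if_neg hc']
      set dx := x (i + 1) - x i with hdxdef
      set dy := y (j + 1) - y j with hdydef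
      set qs := y j + (p - x i) * dy / dx with hqs
      have hstar : (qs - y j) * dx = (p - x i) * dy := by
        rw [hqs]; field_simp; ring
      push_neg at hc'
      have hq1 : q ≤ qs := by nlinarith
      have hq2 : qs ≤ q' := by nlinarith
      calc u1l x y u i j p q ≤ u1l x y u i j p qs := u1l_mono_q hdy h10 hq1
        _ = u1u x y u i j p qs := u1l_eq_u1u hdx hdy hstar
        _ ≤ u1u x y u i j p q' := u1u_mono_q hdy h00 hq2
    · rw [if_neg hc, if_neg hc']
      exact u1u_mono_q hdy h00 hqq

/-- Value on the left vertical edge of a cell. -/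
lemma cellVal_left {x y : ℕ → ℝ} {u : ℕ → ℕ → ℝ} {i j : ℕ} {q : ℝ}
    (hdx : x i < x (i + 1)) (hdy : y j < y (j + 1)) (hq : y j ≤ q) :
    cellVal x y u i j (x i) q
      = ((y (j + 1) - q) / (y (j + 1) - y j)) * u i j
        + ((q - y j) / (y (j + 1) - y j)) * u i (j + 1) := by
  have hdx' : x (i + 1) - x i ≠ 0 := by intro hz; nlinarith
  have hdy' : y (j + 1) - y j ≠ 0 := by intro hz; nlinarith
  unfold cellVal
  rcases eq_or_lt_of_le hq with hEq | hlt
  · rw [if_pos (by rw [← hEq]; ring_nf; nlinarith)]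
    unfold u1l
    rw [← hEq]
    field_simp; ring
  · rw [if_neg (by push_neg; nlinarith)]
    unfold u1u
    rw [sub_self, zero_div]
    ring

/-- Value on the right vertical edge of a cell. -/
lemma cellVal_right {x y : ℕ → ℝ} {u : ℕ → ℕ → ℝ} {i j : ℕ} {q : ℝ}
    (hdx : x i < x (i + 1)) (hdy : y j < y (j + 1)) (hq : q ≤ y (j + 1)) :
    cellVal x y u i j (x (i + 1)) q
      = ((y (j + 1) - q) / (y (j + 1) - y j)) * u (i + 1) j
        + ((q - y j) / (y (j + 1) - y j)) * u (i + 1) (j + 1) := by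
  have hdx' : x (i + 1) - x i ≠ 0 := by intro hz; nlinarith
  have hdy' : y (j + 1) - y j ≠ 0 := by intro hz; nlinarith
  unfold cellVal
  rw [if_pos (by nlinarith)]
  unfold u1l
  rw [sub_self, zero_div, div_self hdx']
  field_simp; ring

/-- Value on the bottom horizontal edge of a cell. -/
lemma cellVal_bottom {x y : ℕ → ℝ} {u : ℕ → ℕ → ℝ} {i j : ℕ} {p : ℝ}
    (hdx : x i < x (i + 1)) (hdy : y j < y (j + 1)) (hp : x i ≤ p) :
    cellVal x y u i j p (y j)
      = ((x (i + 1) - p) / (x (i + 1) - x i)) * u i j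
        + ((p - x i) / (x (i + 1) - x i)) * u (i + 1) j := by
  unfold cellVal
  rw [if_pos (by rw [sub_self, zero_mul]; nlinarith)]
  unfold u1l
  rw [sub_self, zero_div]
  ring

/-- Value on the top horizontal edge of a cell. -/
lemma cellVal_top {x y : ℕ → ℝ} {u : ℕ → ℕ → ℝ} {i j : ℕ} {p : ℝ}
    (hdx : x i < x (i + 1)) (hdy : y j < y (j + 1)) (hp : p ≤ x (i + 1)) :
    cellVal x y u i j p (y (j + 1))
      = ((x (i + 1) - p) / (x (i + 1) - x i)) * u i (j + 1)
        + ((p - x i) / (x (i + 1) - x i)) * u (i + 1) (j + 1) := by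
  have hdx' : x (i + 1) - x i ≠ 0 := by intro hz; nlinarith
  have hdy' : y (j + 1) - y j ≠ 0 := by intro hz; nlinarith
  unfold cellVal
  rcases eq_or_lt_of_le hp with hEq | hlt
  · rw [if_pos (by rw [hEq]; nlinarith)]
    unfold u1l
    rw [hEq, sub_self, zero_div, div_self hdx', div_self hdy']
    ring
  · rw [if_neg (by push_neg; nlinarith)]
    unfold u1u
    rw [sub_self, zero_div, div_self hdy']
    field_simp; ring

end T1

namespace T1

lemma uPL_eq {N₁ N₂ : ℕ} {x y : ℕ → ℝ} {u : ℕ → ℕ → ℝ}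
    (hx : ∀ k, 1 ≤ k → k < N₁ → x k < x (k + 1))
    (hy : ∀ k, 1 ≤ k → k < N₂ → y k < y (k + 1))
    {i j : ℕ} {p q : ℝ}
    (hi1 : 1 ≤ i) (hi2 : i ≤ N₁ - 1) (hj1 : 1 ≤ j) (hj2 : j ≤ N₂ - 1)
    (hm : memCell x y i j p q) :
    uPL N₁ N₂ x y u p q = cellVal x y u i j p q := by
  unfold uPL
  rw [Finset.sum_eq_single_of_mem i (Finset.mem_Icc.mpr ⟨hi1, hi2⟩)]
  · rw [Finset.sum_eq_single_of_mem j (Finset.mem_Icc.mpr ⟨hj1, hj2⟩)]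
    · rw [if_pos hm]; rfl
    · intro j' hj' hne
      rw [if_neg]
      intro hm'
      have hj'' := Finset.mem_Icc.mp hj'
      exact hne (memX_unique hy hj''.1 hj''.2 hj1 hj2 hm'.2 hm.2)
  · intro i' hi' hne
    apply Finset.sum_eq_zero
    intro j' _
    rw [if_neg]
    intro hm'
    have hi'' := Finset.mem_Icc.mp hi'
    exact hne (memX_unique hx hi''.1 hi''.2 hi1 hi2 hm'.1 hm.1)

lemma uPL_mono_p {N₁ N₂ : ℕ} (hN₁ : 2 ≤ N₁) (hN₂ : 2 ≤ N₂)
    {x y : ℕ → ℝ}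
    (hx : ∀ k, 1 ≤ k → k < N₁ → x k < x (k + 1))
    (hy : ∀ k, 1 ≤ k → k < N₂ → y k < y (k + 1))
    {u : ℕ → ℕ → ℝ}
    (hmono₁ : ∀ i j, 1 ≤ i → i < N₁ → 1 ≤ j → j ≤ N₂ → u i j ≤ u (i + 1) j)
    {p p' q : ℝ}
    (hp : p ∈ Set.Icc (x 1) (x N₁)) (hp' : p' ∈ Set.Icc (x 1) (x N₁))
    (hq : q ∈ Set.Icc (y 1) (y N₂)) (hpp : p ≤ p') :
    uPL N₁ N₂ x y u p q ≤ uPL N₁ N₂ x y u p' q := by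
  obtain ⟨i, hi1, hi2, hmi⟩ := exists_memX N₁ hN₁ le_rfl p hp.1 hp.2
  obtain ⟨i', hi1', hi2', hmi'⟩ := exists_memX N₁ hN₁ le_rfl p' hp'.1 hp'.2
  obtain ⟨j, hj1, hj2, hmj⟩ := exists_memX N₂ hN₂ le_rfl q hq.1 hq.2
  rw [uPL_eq hx hy hi1 hi2 hj1 hj2 ⟨hmi, hmj⟩,
      uPL_eq hx hy hi1' hi2' hj1 hj2 ⟨hmi', hmj⟩]
  have hii : i ≤ i' := memX_mono hx hi1' hi2 hmi hmi' hpp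
  have hdy : y j < y (j + 1) := hy j hj1 (by omega)
  have hqb := memX_bounds hmj
  have hpb := memX_bounds hmi
  have hpb' := memX_bounds hmi'
  rcases eq_or_lt_of_le hii with hEq | hlt
  · subst hEq
    exact cellVal_mono_p (hx i hi1 (by omega)) hdy
      (hmono₁ i j hi1 (by omega) hj1 (by omega))
      (hmono₁ i (j + 1) hi1 (by omega) (by omega) (by omega)) hpp
  · have hdxi := hx i hi1 (by omega)
    have hdxi' := hx i' hi1' (by omega)
    have hc0 : 0 ≤ (y (j + 1) - q) / (y (j + 1) - y j) :=
      div_nonneg (by linarith [hqb.2]) (by linarith)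
    have hc1 : 0 ≤ (q - y j) / (y (j + 1) - y j) :=
      div_nonneg (by linarith [hqb.1]) (by linarith)
    calc cellVal x y u i j p q
        ≤ cellVal x y u i j (x (i + 1)) q :=
          cellVal_mono_p hdxi hdy (hmono₁ i j hi1 (by omega) hj1 (by omega))
            (hmono₁ i (j + 1) hi1 (by omega) (by omega) (by omega)) hpb.2
      _ = ((y (j + 1) - q) / (y (j + 1) - y j)) * u (i + 1) j
            + ((q - y j) / (y (j + 1) - y j)) * u (i + 1) (j + 1) :=
          cellVal_right hdxi hdy hqb.2
      _ ≤ ((y (j + 1) - q) / (y (j + 1) - y j)) * u i' j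
            + ((q - y j) / (y (j + 1) - y j)) * u i' (j + 1) := by
          refine chain_le (fun k => ((y (j + 1) - q) / (y (j + 1) - y j)) * u k j
              + ((q - y j) / (y (j + 1) - y j)) * u k (j + 1)) N₁
            (fun k hk hkN => add_le_add
              (mul_le_mul_of_nonneg_left (hmono₁ k j hk hkN hj1 (by omega)) hc0)
              (mul_le_mul_of_nonneg_left (hmono₁ k (j + 1) hk hkN (by omega) (by omega)) hc1))
            i' (i + 1) (by omega) (by omega) (by omega)
      _ = cellVal x y u i' j (x i') q := (cellVal_left hdxi' hdy hqb.1).symm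
      _ ≤ cellVal x y u i' j p' q :=
          cellVal_mono_p hdxi' hdy (hmono₁ i' j hi1' (by omega) hj1 (by omega))
            (hmono₁ i' (j + 1) hi1' (by omega) (by omega) (by omega)) hpb'.1

lemma uPL_mono_q {N₁ N₂ : ℕ} (hN₁ : 2 ≤ N₁) (hN₂ : 2 ≤ N₂)
    {x y : ℕ → ℝ}
    (hx : ∀ k, 1 ≤ k → k < N₁ → x k < x (k + 1))
    (hy : ∀ k, 1 ≤ k → k < N₂ → y k < y (k + 1))
    {u : ℕ → ℕ → ℝ}
    (hmono₂ : ∀ i j, 1 ≤ i → i ≤ N₁ → 1 ≤ j → j < N₂ → u i j ≤ u i (j + 1))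
    {p q q' : ℝ}
    (hp : p ∈ Set.Icc (x 1) (x N₁))
    (hq : q ∈ Set.Icc (y 1) (y N₂)) (hq' : q' ∈ Set.Icc (y 1) (y N₂)) (hqq : q ≤ q') :
    uPL N₁ N₂ x y u p q ≤ uPL N₁ N₂ x y u p q' := by
  obtain ⟨i, hi1, hi2, hmi⟩ := exists_memX N₁ hN₁ le_rfl p hp.1 hp.2
  obtain ⟨j, hj1, hj2, hmj⟩ := exists_memX N₂ hN₂ le_rfl q hq.1 hq.2
  obtain ⟨j', hj1', hj2', hmj'⟩ := exists_memX N₂ hN₂ le_rfl q' hq'.1 hq'.2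
  rw [uPL_eq hx hy hi1 hi2 hj1 hj2 ⟨hmi, hmj⟩,
      uPL_eq hx hy hi1 hi2 hj1' hj2' ⟨hmi, hmj'⟩]
  have hjj : j ≤ j' := memX_mono hy hj1' hj2 hmj hmj' hqq
  have hdx : x i < x (i + 1) := hx i hi1 (by omega)
  have hpb := memX_bounds hmi
  have hqb := memX_bounds hmj
  have hqb' := memX_bounds hmj'
  rcases eq_or_lt_of_le hjj with hEq | hlt
  · subst hEq
    exact cellVal_mono_q hdx (hy j hj1 (by omega))
      (hmono₂ i j hi1 (by omega) hj1 (by omega))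
      (hmono₂ (i + 1) j (by omega) (by omega) hj1 (by omega)) hqq
  · have hdyj := hy j hj1 (by omega)
    have hdyj' := hy j' hj1' (by omega)
    have hc0 : 0 ≤ (x (i + 1) - p) / (x (i + 1) - x i) :=
      div_nonneg (by linarith [hpb.2]) (by linarith)
    have hc1 : 0 ≤ (p - x i) / (x (i + 1) - x i) :=
      div_nonneg (by linarith [hpb.1]) (by linarith)
    calc cellVal x y u i j p q
        ≤ cellVal x y u i j p (y (j + 1)) :=
          cellVal_mono_q hdx hdyj (hmono₂ i j hi1 (by omega) hj1 (by omega))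
            (hmono₂ (i + 1) j (by omega) (by omega) hj1 (by omega)) hqb.2
      _ = ((x (i + 1) - p) / (x (i + 1) - x i)) * u i (j + 1)
            + ((p - x i) / (x (i + 1) - x i)) * u (i + 1) (j + 1) :=
          cellVal_top hdx hdyj hpb.2
      _ ≤ ((x (i + 1) - p) / (x (i + 1) - x i)) * u i j'
            + ((p - x i) / (x (i + 1) - x i)) * u (i + 1) j' := by
          refine chain_le (fun k => ((x (i + 1) - p) / (x (i + 1) - x i)) * u i k
              + ((p - x i) / (x (i + 1) - x i)) * u (i + 1) k) N₂
            (fun k hk hkN => add_le_add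
              (mul_le_mul_of_nonneg_left (hmono₂ i k hi1 (by omega) hk hkN) hc0)
              (mul_le_mul_of_nonneg_left (hmono₂ (i + 1) k (by omega) (by omega) hk hkN) hc1))
            j' (j + 1) (by omega) (by omega) (by omega)
      _ = cellVal x y u i j' p (y j') := (cellVal_bottom hdx hdyj' hpb.1).symm
      _ ≤ cellVal x y u i j' p q' :=
          cellVal_mono_q hdx hdyj' (hmono₂ i j' hi1 (by omega) hj1' (by omega))
            (hmono₂ (i + 1) j' (by omega) (by omega) hj1' (by omega)) hqb'.1

end T1

/-- Componentwise monotonicity of the grid values implies componentwise monotonicity of the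
Type-1 piecewise linear function on all of `T`. -/
theorem type1_PLA_monotone
    (N₁ N₂ : ℕ) (hN₁ : 2 ≤ N₁) (hN₂ : 2 ≤ N₂)
    (x y : ℕ → ℝ)
    (hx : ∀ i, 1 ≤ i → i < N₁ → x i < x (i + 1))
    (hy : ∀ j, 1 ≤ j → j < N₂ → y j < y (j + 1))
    (u : ℕ → ℕ → ℝ)
    (hmono₁ : ∀ i j, 1 ≤ i → i < N₁ → 1 ≤ j → j ≤ N₂ → u i j ≤ u (i + 1) j)
    (hmono₂ : ∀ i j, 1 ≤ i → i ≤ N₁ → 1 ≤ j → j < N₂ → u i j ≤ u i (j + 1)) :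
    ∀ p p' q q', p ∈ Set.Icc (x 1) (x N₁) → p' ∈ Set.Icc (x 1) (x N₁) →
      q ∈ Set.Icc (y 1) (y N₂) → q' ∈ Set.Icc (y 1) (y N₂) →
      p ≤ p' → q ≤ q' →
      uPL N₁ N₂ x y u p q ≤ uPL N₁ N₂ x y u p' q' := by
  intro p p' q q' hp hp' hq hq' hpp hqq
  exact le_trans
    (T1.uPL_mono_p hN₁ hN₂ hx hy hmono₁ hp hp' hq hpp)
    (T1.uPL_mono_q hN₁ hN₂ hx hy hmono₂ hp' hq hq' hqq)

end
end

section
/- Suppose the grid values satisfy the discrete conservative conditions u_{i,j+1} + u_{i+1,j} ≥ u_{i,j} + u_{i+1,j+1} for all 1 ≤ i ≤ N₁−1, 1 ≤ j ≤ N₂−1. Then the Type-1 piecewise linear function u_N satisfies the conservative property on all of T: for all a ≤ b in [x₁,x_{N₁}] and c ≤ d in [y₁,y_{N₂}], u_N(a,d) + u_N(b,c) ≥ u_N(a,c) + u_N(b,d). -/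
open Finset Set
open scoped Classical

noncomputable section

namespace T1Aux

def G (x y : ℕ → ℝ) (u : ℕ → ℕ → ℝ) (i j : ℕ) (p q : ℝ) : ℝ :=
  u i j + ((p - x i) / (x (i + 1) - x i)) * (u (i + 1) j - u i j)
    + ((q - y j) / (y (j + 1) - y j)) * (u i (j + 1) - u i j)
    - min ((p - x i) / (x (i + 1) - x i)) ((q - y j) / (y (j + 1) - y j)) *
        (u i (j + 1) + u (i + 1) j - u i j - u (i + 1) (j + 1))

lemma cell_closed (x y : ℕ → ℝ) (u : ℕ → ℕ → ℝ) (i j : ℕ)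
    (hdx : 0 < x (i + 1) - x i) (hdy : 0 < y (j + 1) - y j) (p q : ℝ) :
    (if (q - y j) * (x (i + 1) - x i) ≤ (p - x i) * (y (j + 1) - y j)
      then u1l x y u i j p q else u1u x y u i j p q) = G x y u i j p q := by
  have hdx' : x (i + 1) - x i ≠ 0 := ne_of_gt hdx
  have hdy' : y (j + 1) - y j ≠ 0 := ne_of_gt hdy
  unfold G
  split_ifs with h
  · have hle : (q - y j) / (y (j + 1) - y j) ≤ (p - x i) / (x (i + 1) - x i) := by
      rw [div_le_div_iff₀ hdy hdx]; exact h
    rw [min_eq_right hle]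
    unfold u1l
    field_simp
    ring
  · have hle : (p - x i) / (x (i + 1) - x i) ≤ (q - y j) / (y (j + 1) - y j) := by
      rw [div_le_div_iff₀ hdx hdy]; push_neg at h; exact h.le
    rw [min_eq_left hle]
    unfold u1u
    field_simp
    ring

lemma mono (N : ℕ) (x : ℕ → ℝ) (hx : ∀ i, 1 ≤ i → i < N → x i < x (i + 1)) :
    ∀ i i', 1 ≤ i → i ≤ i' → i' ≤ N → x i ≤ x i' := by
  intro i i' h1 h2
  induction i', h2 using Nat.le_induction with
  | base => exact fun _ => le_refl _
  | succ k hk ih =>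
    intro hkN
    exact le_trans (ih (by omega)) (le_of_lt (hx k (by omega) (by omega)))

lemma memX_lt_absurd (N : ℕ) (x : ℕ → ℝ) (hx : ∀ i, 1 ≤ i → i < N → x i < x (i + 1))
    {i i' : ℕ} {p : ℝ} (hi : 1 ≤ i) (hii' : i < i') (hi' : i' < N)
    (h : memX x i p) (h' : memX x i' p) : False := by
  have hp : p ≤ x (i + 1) := by
    unfold memX at h
    split_ifs at h with h1
    · subst h1; exact h.2
    · exact h.2
  have hp' : x i' < p := by
    unfold memX at h'
    rw [if_neg (by omega)] at h'
    exact h'.1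
  have hle : x (i + 1) ≤ x i' := mono N x hx (i + 1) i' (by omega) (by omega) (by omega)
  linarith

lemma memX_unique (N : ℕ) (x : ℕ → ℝ) (hx : ∀ i, 1 ≤ i → i < N → x i < x (i + 1))
    {i i' : ℕ} {p : ℝ} (hi : 1 ≤ i) (hiN : i < N) (hi' : 1 ≤ i') (hi'N : i' < N)
    (h : memX x i p) (h' : memX x i' p) : i = i' := by
  rcases lt_trichotomy i i' with hlt | heq | hgt
  · exact absurd (memX_lt_absurd N x hx hi hlt hi'N h h') (by simp)
  · exact heq
  · exact absurd (memX_lt_absurd N x hx hi' hgt hiN h' h) (by simp)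

lemma memX_loc (N : ℕ) (x : ℕ → ℝ) (hx : ∀ i, 1 ≤ i → i < N → x i < x (i + 1))
    (i : ℕ) (hi1 : 1 ≤ i) (hiN : i < N) (p : ℝ) (hp1 : x i ≤ p) (hp2 : p ≤ x (i + 1)) :
    ∃ i₀, 1 ≤ i₀ ∧ i₀ < N ∧ memX x i₀ p ∧ (i₀ = i ∨ (i₀ + 1 = i ∧ p = x i)) := by
  rcases eq_or_lt_of_le hp1 with heq | hlt
  · by_cases h1 : i = 1
    · refine ⟨i, hi1, hiN, ?_, Or.inl rfl⟩
      unfold memX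
      rw [if_pos h1]
      subst h1
      exact ⟨heq.le, hp2⟩
    · obtain ⟨k, rfl⟩ : ∃ k, i = k + 1 := ⟨i - 1, by omega⟩
      refine ⟨k, by omega, by omega, ?_, Or.inr ⟨rfl, heq.symm⟩⟩
      unfold memX
      split_ifs with hk1
      · subst hk1
        exact ⟨le_trans (le_of_lt (hx 1 le_rfl (by omega))) heq.le, heq.ge⟩
      · exact ⟨heq ▸ hx k (by omega) (by omega), heq.ge⟩
  · refine ⟨i, hi1, hiN, ?_, Or.inl rfl⟩
    unfold memX
    split_ifs with h1
    · subst h1; exact ⟨hp1, hp2⟩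
    · exact ⟨hlt, hp2⟩





lemma uPL_eval (N₁ N₂ : ℕ) (x y : ℕ → ℝ) (u : ℕ → ℕ → ℝ)
    (hx : ∀ i, 1 ≤ i → i < N₁ → x i < x (i + 1))
    (hy : ∀ j, 1 ≤ j → j < N₂ → y j < y (j + 1))
    (i j : ℕ) (hi1 : 1 ≤ i) (hiN : i < N₁) (hj1 : 1 ≤ j) (hjN : j < N₂)
    (p q : ℝ) (hp1 : x i ≤ p) (hp2 : p ≤ x (i + 1)) (hq1 : y j ≤ q) (hq2 : q ≤ y (j + 1)) :
    uPL N₁ N₂ x y u p q = G x y u i j p q := by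
  obtain ⟨i₀, hi₀1, hi₀N, hmX, hcaseX⟩ := memX_loc N₁ x hx i hi1 hiN p hp1 hp2
  obtain ⟨j₀, hj₀1, hj₀N, hmY, hcaseY⟩ := memX_loc N₂ y hy j hj1 hjN q hq1 hq2
  have hdx : 0 < x (i + 1) - x i := sub_pos.2 (hx i hi1 hiN)
  have hdy : 0 < y (j + 1) - y j := sub_pos.2 (hy j hj1 hjN)
  have hdx₀ : 0 < x (i₀ + 1) - x i₀ := sub_pos.2 (hx i₀ hi₀1 hi₀N)
  have hdy₀ : 0 < y (j₀ + 1) - y j₀ := sub_pos.2 (hy j₀ hj₀1 hj₀N)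
  have hsum : uPL N₁ N₂ x y u p q =
      (if (q - y j₀) * (x (i₀ + 1) - x i₀) ≤ (p - x i₀) * (y (j₀ + 1) - y j₀)
        then u1l x y u i₀ j₀ p q else u1u x y u i₀ j₀ p q) := by
    simp only [uPL, memCell]
    refine Eq.trans (Finset.sum_eq_single_of_mem i₀ (Finset.mem_Icc.2 ⟨hi₀1, by omega⟩) ?_)
      (Eq.trans (Finset.sum_eq_single_of_mem j₀ (Finset.mem_Icc.2 ⟨hj₀1, by omega⟩) ?_)
        (if_pos ⟨hmX, hmY⟩))
    · intro i' hi' hne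
      refine Finset.sum_eq_zero fun j' _ => ?_
      refine if_neg ?_
      rintro ⟨hX, -⟩
      have hr := Finset.mem_Icc.1 hi'
      exact hne (memX_unique N₁ x hx (by omega) (by omega) hi₀1 hi₀N hX hmX)
    · intro j' hj' hne
      refine if_neg ?_
      rintro ⟨-, hY⟩
      have hr := Finset.mem_Icc.1 hj'
      exact hne (memX_unique N₂ y hy (by omega) (by omega) hj₀1 hj₀N hY hmY)
  rw [hsum, cell_closed x y u i₀ j₀ hdx₀ hdy₀]
  rcases hcaseX with rfl | ⟨hii, hpx⟩
  · rcases hcaseY with rfl | ⟨hjj, hqy⟩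
    · rfl
    · subst hjj
      subst hqy
      have h1 : (y (j₀ + 1) - y j₀) / (y (j₀ + 1) - y j₀) = 1 := div_self (ne_of_gt hdy₀)
      have h2 : (y (j₀ + 1) - y (j₀ + 1)) / (y (j₀ + 1 + 1) - y (j₀ + 1)) = 0 := by
        rw [sub_self, zero_div]
      have hα0 : 0 ≤ (p - x i₀) / (x (i₀ + 1) - x i₀) := div_nonneg (by linarith) hdx₀.le
      have hα1 : (p - x i₀) / (x (i₀ + 1) - x i₀) ≤ 1 := by
        rw [div_le_one hdx₀]; linarith
      unfold G
      rw [h1, h2, min_eq_left hα1, min_eq_right hα0]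
      all_goals ring
  · rcases hcaseY with rfl | ⟨hjj, hqy⟩
    · subst hii
      subst hpx
      have h1 : (x (i₀ + 1) - x i₀) / (x (i₀ + 1) - x i₀) = 1 := div_self (ne_of_gt hdx₀)
      have h2 : (x (i₀ + 1) - x (i₀ + 1)) / (x (i₀ + 1 + 1) - x (i₀ + 1)) = 0 := by
        rw [sub_self, zero_div]
      have hβ0 : 0 ≤ (q - y j₀) / (y (j₀ + 1) - y j₀) := div_nonneg (by linarith) hdy₀.le
      have hβ1 : (q - y j₀) / (y (j₀ + 1) - y j₀) ≤ 1 := by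
        rw [div_le_one hdy₀]; linarith
      unfold G
      rw [h1, h2, min_eq_right hβ1, min_eq_left hβ0]
      all_goals ring
    · subst hii
      subst hjj
      subst hpx
      subst hqy
      have h1 : (x (i₀ + 1) - x i₀) / (x (i₀ + 1) - x i₀) = 1 := div_self (ne_of_gt hdx₀)
      have h2 : (x (i₀ + 1) - x (i₀ + 1)) / (x (i₀ + 1 + 1) - x (i₀ + 1)) = 0 := by
        rw [sub_self, zero_div]
      have h3 : (y (j₀ + 1) - y j₀) / (y (j₀ + 1) - y j₀) = 1 := div_self (ne_of_gt hdy₀)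
      have h4 : (y (j₀ + 1) - y (j₀ + 1)) / (y (j₀ + 1 + 1) - y (j₀ + 1)) = 0 := by
        rw [sub_self, zero_div]
      unfold G
      rw [h1, h2, h3, h4, min_self, min_self]
      all_goals ring

lemma min_submod {s s' t t' : ℝ} (hs : s ≤ s') (ht : t ≤ t') :
    min s t' + min s' t ≤ min s t + min s' t' := by
  simp only [min_def]
  split_ifs <;> linarith

lemma G_cell (x y : ℕ → ℝ) (u : ℕ → ℕ → ℝ) (i j : ℕ)
    (hdx : 0 < x (i + 1) - x i) (hdy : 0 < y (j + 1) - y j)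
    (hE : 0 ≤ u i (j + 1) + u (i + 1) j - u i j - u (i + 1) (j + 1))
    {a b c d : ℝ} (hab : a ≤ b) (hcd : c ≤ d) :
    G x y u i j a c + G x y u i j b d ≤ G x y u i j a d + G x y u i j b c := by
  have hs : (a - x i) / (x (i + 1) - x i) ≤ (b - x i) / (x (i + 1) - x i) := by
    rw [div_le_div_iff₀ hdx hdx]; nlinarith
  have ht : (c - y j) / (y (j + 1) - y j) ≤ (d - y j) / (y (j + 1) - y j) := by
    rw [div_le_div_iff₀ hdy hdy]; nlinarith
  have key := min_submod hs ht
  have key2 := mul_le_mul_of_nonneg_right key hE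
  unfold G
  nlinarith [key2]


lemma stepX (N₁ N₂ : ℕ) (x y : ℕ → ℝ)
    (hx : ∀ i, 1 ≤ i → i < N₁ → x i < x (i + 1))
    (hy : ∀ j, 1 ≤ j → j < N₂ → y j < y (j + 1))
    (u : ℕ → ℕ → ℝ)
    (hcons : ∀ i j, 1 ≤ i → i < N₁ → 1 ≤ j → j < N₂ →
      u i j + u (i + 1) (j + 1) ≤ u i (j + 1) + u (i + 1) j)
    (j : ℕ) (hj1 : 1 ≤ j) (hjN : j < N₂)
    (c d : ℝ) (hc : y j ≤ c) (hcd : c ≤ d) (hd : d ≤ y (j + 1)) :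
    ∀ k, 1 ≤ k → k ≤ N₁ → ∀ a b, x 1 ≤ a → a ≤ b → b ≤ x k →
      uPL N₁ N₂ x y u a c + uPL N₁ N₂ x y u b d
        ≤ uPL N₁ N₂ x y u a d + uPL N₁ N₂ x y u b c := by
  intro k hk1
  induction k, hk1 using Nat.le_induction with
  | base =>
    intro _ a b ha hab hb
    have hba : a = b := le_antisymm hab (le_trans hb ha)
    subst hba
    linarith
  | succ k hk ih =>
    intro hkN a b ha hab hb
    have hkN' : k < N₁ := by omega
    have hcell : ∀ a' b', x k ≤ a' → a' ≤ b' → b' ≤ x (k + 1) →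
        uPL N₁ N₂ x y u a' c + uPL N₁ N₂ x y u b' d
          ≤ uPL N₁ N₂ x y u a' d + uPL N₁ N₂ x y u b' c := by
      intro a' b' h1 h2 h3
      rw [uPL_eval N₁ N₂ x y u hx hy k j hk hkN' hj1 hjN a' c h1 (le_trans h2 h3) hc (le_trans hcd hd),
        uPL_eval N₁ N₂ x y u hx hy k j hk hkN' hj1 hjN b' d (le_trans h1 h2) h3 (le_trans hc hcd) hd,
        uPL_eval N₁ N₂ x y u hx hy k j hk hkN' hj1 hjN a' d h1 (le_trans h2 h3) (le_trans hc hcd) hd,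
        uPL_eval N₁ N₂ x y u hx hy k j hk hkN' hj1 hjN b' c (le_trans h1 h2) h3 hc (le_trans hcd hd)]
      have hE : 0 ≤ u k (j + 1) + u (k + 1) j - u k j - u (k + 1) (j + 1) := by
        have := hcons k j hk hkN' hj1 hjN
        linarith
      exact G_cell x y u k j (sub_pos.2 (hx k hk hkN')) (sub_pos.2 (hy j hj1 hjN)) hE h2 hcd
    by_cases hbk : b ≤ x k
    · exact ih (by omega) a b ha hab hbk
    · push_neg at hbk
      by_cases hak : x k ≤ a
      · exact hcell a b hak hab hb
      · push_neg at hak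
        have h1 := ih (by omega) a (x k) ha hak.le le_rfl
        have h2 := hcell (x k) b le_rfl hbk.le hb
        linarith

lemma mainY (N₁ N₂ : ℕ) (hN₁ : 2 ≤ N₁) (x y : ℕ → ℝ)
    (hx : ∀ i, 1 ≤ i → i < N₁ → x i < x (i + 1))
    (hy : ∀ j, 1 ≤ j → j < N₂ → y j < y (j + 1))
    (u : ℕ → ℕ → ℝ)
    (hcons : ∀ i j, 1 ≤ i → i < N₁ → 1 ≤ j → j < N₂ →
      u i j + u (i + 1) (j + 1) ≤ u i (j + 1) + u (i + 1) j) :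
    ∀ l, 1 ≤ l → l ≤ N₂ → ∀ a b c d : ℝ,
      x 1 ≤ a → a ≤ b → b ≤ x N₁ → y 1 ≤ c → c ≤ d → d ≤ y l →
      uPL N₁ N₂ x y u a c + uPL N₁ N₂ x y u b d
        ≤ uPL N₁ N₂ x y u a d + uPL N₁ N₂ x y u b c := by
  intro l hl1
  induction l, hl1 using Nat.le_induction with
  | base =>
    intro _ a b c d ha hab hb hc hcd hd
    have hdc : c = d := le_antisymm hcd (le_trans hd hc)
    subst hdc
    linarith
  | succ l hl ih =>
    intro hlN a b c d ha hab hb hc hcd hd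
    have hlN' : l < N₂ := by omega
    have hcell : ∀ c' d', y l ≤ c' → c' ≤ d' → d' ≤ y (l + 1) →
        uPL N₁ N₂ x y u a c' + uPL N₁ N₂ x y u b d'
          ≤ uPL N₁ N₂ x y u a d' + uPL N₁ N₂ x y u b c' := by
      intro c' d' h1 h2 h3
      exact stepX N₁ N₂ x y hx hy u hcons l hl hlN' c' d' h1 h2 h3 N₁ (by omega) le_rfl
        a b ha hab hb
    by_cases hdl : d ≤ y l
    · exact ih (by omega) a b c d ha hab hb hc hcd hdl
    · push_neg at hdl
      by_cases hcl : y l ≤ c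
      · exact hcell c d hcl hcd hd
      · push_neg at hcl
        have h1 := ih (by omega) a b c (y l) ha hab hb hc hcl.le le_rfl
        have h2 := hcell (y l) d le_rfl hdl.le hd
        linarith

end T1Aux

/-- The discrete conservative conditions on the grid values imply that the Type-1 piecewise
linear function satisfies the conservative property on all of `T`. -/
theorem type1_PLA_conservative
    (N₁ N₂ : ℕ) (hN₁ : 2 ≤ N₁) (hN₂ : 2 ≤ N₂)
    (x y : ℕ → ℝ)
    (hx : ∀ i, 1 ≤ i → i < N₁ → x i < x (i + 1))
    (hy : ∀ j, 1 ≤ j → j < N₂ → y j < y (j + 1))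
    (u : ℕ → ℕ → ℝ)
    (hcons : ∀ i j, 1 ≤ i → i < N₁ → 1 ≤ j → j < N₂ →
      u i j + u (i + 1) (j + 1) ≤ u i (j + 1) + u (i + 1) j) :
    ∀ a b c d : ℝ, x 1 ≤ a → a ≤ b → b ≤ x N₁ → y 1 ≤ c → c ≤ d → d ≤ y N₂ →
      uPL N₁ N₂ x y u a c + uPL N₁ N₂ x y u b d
        ≤ uPL N₁ N₂ x y u a d + uPL N₁ N₂ x y u b c := by
  intro a b c d ha hab hb hc hcd hd
  exact T1Aux.mainY N₁ N₂ hN₁ x y hx hy u hcons N₂ (by omega) le_rfl a b c d ha hab hb hc hcd hd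

end
end

section
/- Fix a single cell [a,a′] × [b,b′] with a < a′ and b < b′ and corner values u₀₀ at (a,b), u₁₀ at (a′,b), u₀₁ at (a,b′), u₁₁ at (a′,b′). Define the Type-1 value v₁(x,y) on the cell by: v₁(x,y) := ((a′−x)/(a′−a))u₀₀ + ((x−a)/(a′−a) − (y−b)/(b′−b))u₁₀ + ((y−b)/(b′−b))u₁₁ if (y−b)(a′−a) ≤ (x−a)(b′−b), and v₁(x,y) := ((b′−y)/(b′−b))u₀₀ + ((y−b)/(b′−b) − (x−a)/(a′−a))u₀₁ + ((x−a)/(a′−a))u₁₁ otherwise. Define the Type-2 value v₂(x,y) by: v₂(x,y) := ((a′−x)/(a′−a))u₀₁ + ((x−a)/(a′−a) − (b′−y)/(b′−b))u₁₁ + ((b′−y)/(b′−b))u₁₀ if (b′−y)(a′−a) ≤ (x−a)(b′−b), and v₂(x,y) := ((y−b)/(b′−b))u₀₁ + ((a′−x)/(a′−a) − (y−b)/(b′−b))u₀₀ + ((x−a)/(a′−a))u₁₀ otherwise. If the conservative condition u₀₁ + u₁₀ ≥ u₀₀ + u₁₁ holds, then v₂(x,y) ≥ v₁(x,y) for every (x,y)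 ∈ [a,a′] × [b,b′]; if instead u₀₁ + u₁₀ ≤ u₀₀ + u₁₁, then v₁(x,y) ≥ v₂(x,y) for every (x,y) in the cell. (This is the majorization claim illustrated in Figure 1(b)–(c) of the paper.) -/
open scoped Classical

noncomputable section

/-- Type-1 (main-diagonal) piecewise linear interpolant of the four corner values over the cell
`[a,a'] × [b,b']`. -/
def type1Val (a a' b b' u00 u10 u01 u11 p q : ℝ) : ℝ :=
  if (q - b) * (a' - a) ≤ (p - a) * (b' - b) then
    ((a' - p) / (a' - a)) * u00 + ((p - a) / (a' - a) - (q - b) / (b' - b)) * u10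
      + ((q - b) / (b' - b)) * u11
  else
    ((b' - q) / (b' - b)) * u00 + ((q - b) / (b' - b) - (p - a) / (a' - a)) * u01
      + ((p - a) / (a' - a)) * u11

/-- Type-2 (counter-diagonal) piecewise linear interpolant of the four corner values over the
cell `[a,a'] × [b,b']`. -/
def type2Val (a a' b b' u00 u10 u01 u11 p q : ℝ) : ℝ :=
  if (b' - q) * (a' - a) ≤ (p - a) * (b' - b) then
    ((a' - p) / (a' - a)) * u01 + ((p - a) / (a' - a) - (b' - q) / (b' - b)) * u11
      + ((b' - q) / (b' - b)) * u10
  else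
    ((q - b) / (b' - b)) * u01 + ((a' - p) / (a' - a) - (q - b) / (b' - b)) * u00
      + ((p - a) / (a' - a)) * u10

/-- Majorization between the Type-1 and Type-2 interpolants on a cell: under the conservative
condition the Type-2 interpolant majorizes the Type-1 one, and conversely when the condition is
reversed (Figure 1(b)–(c) of the paper). -/
theorem type2_majorizes_type1_iff_conservative
    (a a' b b' u00 u10 u01 u11 : ℝ) (ha : a < a') (hb : b < b')
    (p q : ℝ) (hp : p ∈ Set.Icc a a') (hq : q ∈ Set.Icc b b') :
    (u00 + u11 ≤ u01 + u10 →
      type1Val a a' b b' u00 u10 u01 u11 p q ≤ type2Val a a' b b' u00 u10 u01 u11 p q) ∧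
    (u01 + u10 ≤ u00 + u11 →
      type2Val a a' b b' u00 u10 u01 u11 p q ≤ type1Val a a' b b' u00 u10 u01 u11 p q) := by
  obtain ⟨hp1, hp2⟩ := hp
  obtain ⟨hq1, hq2⟩ := hq
  have hA : (0:ℝ) < a' - a := by linarith
  have hB : (0:ℝ) < b' - b := by linarith
  set s : ℝ := (p - a) / (a' - a) with hs
  set t : ℝ := (q - b) / (b' - b) with ht
  have hs0 : 0 ≤ s := div_nonneg (by linarith) hA.le
  have hs1 : s ≤ 1 := by rw [hs, div_le_one hA]; linarith
  have ht0 : 0 ≤ t := div_nonneg (by linarith) hB.le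
  have ht1 : t ≤ 1 := by rw [ht, div_le_one hB]; linarith
  have e1 : (a' - p) / (a' - a) = 1 - s := by
    rw [hs, eq_sub_iff_add_eq, ← add_div, div_eq_one_iff_eq hA.ne']; ring
  have e2 : (b' - q) / (b' - b) = 1 - t := by
    rw [ht, eq_sub_iff_add_eq, ← add_div, div_eq_one_iff_eq hB.ne']; ring
  have c1 : ((q - b) * (a' - a) ≤ (p - a) * (b' - b)) ↔ t ≤ s := by
    rw [hs, ht, div_le_div_iff₀ hB hA]
  have c2 : ((b' - q) * (a' - a) ≤ (p - a) * (b' - b)) ↔ 1 - t ≤ s := by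
    rw [hs, ← e2, div_le_div_iff₀ hB hA]
  unfold type1Val type2Val
  rw [e1, e2]
  constructor <;> intro h <;> split_ifs with h1 h2 h2 <;>
    first
    | (rw [c2] at h1; rw [c1] at h2;
       nlinarith [mul_nonneg hs0 (sub_nonneg.2 h), mul_nonneg ht0 (sub_nonneg.2 h)])
    | (rw [c2] at h1; rw [c1] at h2; push_neg at h1 h2 ⊢; nlinarith)
    | nlinarith

end
end

section
/- Let a̲ < ā and b̲ < b̄, and let F00, F10, F01, F11 ∈ ℝ. Define F : [a̲,ā] × [b̲,b̄] → ℝ as the continuous piecewise linear function with two linear pieces separated by the main diagonal from (a̲,b̲) to (ā,b̄): F(x,y) := ((ā−x)/(ā−a̲))F00 + ((x−a̲)/(ā−a̲) − (y−b̲)/(b̄−b̲))F10 + ((y−b̲)/(b̄−b̲))F11 when (y−b̲)(ā−a̲) ≤ (x−a̲)(b̄−b̲), and F(x,y) := ((b̄−y)/(b̄−b̲))F00 + ((y−b̲)/(b̄−b̲) − (x−a̲)/(ā−a̲))F01 + ((x−a̲)/(ā−a̲))F11 otherwise. Let y(x) := b̲ + (b̄−b̲)(x−a̲)/(ā−a̲)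 be the linear function representing the diagonal. Then for every subrectangle with a̲ ≤ a ≤ a′ ≤ ā and b̲ ≤ b ≤ b′ ≤ b̄, F(a′,b′) − F(a,b′) − F(a′,b) + F(a,b) = ((F11 − F01 − F10 + F00)/(ā−a̲)) · λ({x ∈ [a,a′] : b ≤ y(x) ≤ b′}), where λ denotes one-dimensional Lebesgue measure. (This is the content of Proposition 3.2 of the paper for indicator test functions: the Lebesgue–Stieltjes measure induced by a two-piece piecewise linear F is concentrated on the diagonal with uniform density in x.) -/
open scoped Classical

noncomputable section

lemma minmax4 (u u' v v' : ℝ) (h1 : u ≤ u') (h2 : v ≤ v') :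
    min u' v' - min u v' - min u' v + min u v = max (min u' v' - max u v) 0 := by
  simp only [min_def, max_def]
  split_ifs <;> linarith

/-- The two-piece piecewise linear function on `[alo, ahi] × [blo, bhi]` whose pieces are
separated by the main diagonal from `(alo, blo)` to `(ahi, bhi)`. -/
def pwF (alo ahi blo bhi F00 F10 F01 F11 p q : ℝ) : ℝ :=
  if (q - blo) * (ahi - alo) ≤ (p - alo) * (bhi - blo) then
    ((ahi - p) / (ahi - alo)) * F00 + ((p - alo) / (ahi - alo) - (q - blo) / (bhi - blo)) * F10
      + ((q - blo) / (bhi - blo)) * F11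
  else
    ((bhi - q) / (bhi - blo)) * F00 + ((q - blo) / (bhi - blo) - (p - alo) / (ahi - alo)) * F01
      + ((p - alo) / (ahi - alo)) * F11

/-- The linear function representing the main diagonal. -/
def diagLine (alo ahi blo bhi t : ℝ) : ℝ :=
  blo + (bhi - blo) * (t - alo) / (ahi - alo)

lemma pwF_eq (alo ahi blo bhi F00 F10 F01 F11 p q : ℝ) (ha : alo < ahi) (hb : blo < bhi) :
    pwF alo ahi blo bhi F00 F10 F01 F11 p q
      = F00 + ((p - alo) / (ahi - alo)) * (F10 - F00) + ((q - blo) / (bhi - blo)) * (F01 - F00)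
        + (F11 - F01 - F10 + F00) * min ((p - alo) / (ahi - alo)) ((q - blo) / (bhi - blo)) := by
  have ha0 : (0:ℝ) < ahi - alo := by linarith
  have hb0 : (0:ℝ) < bhi - blo := by linarith
  unfold pwF
  split_ifs with h
  · rw [min_eq_right (by rw [div_le_div_iff₀ hb0 ha0]; linarith)]
    field_simp
    ring
  · push_neg at h
    rw [min_eq_left (by rw [div_le_div_iff₀ ha0 hb0]; nlinarith)]
    field_simp
    ring

/-- Proposition 3.2 for indicator test functions: the Lebesgue–Stieltjes measure induced by a
two-piece piecewise linear `F` is concentrated on the diagonal with uniform density in `x`: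
the `F`-volume of any subrectangle equals the cross-difference density times the Lebesgue
measure of the part of the `x`-interval whose diagonal point lies in the subrectangle. -/
theorem crossDifference_of_piecewise_linear
    (alo ahi blo bhi : ℝ) (ha : alo < ahi) (hb : blo < bhi)
    (F00 F10 F01 F11 : ℝ)
    (a a' b b' : ℝ) (ha1 : alo ≤ a) (ha2 : a ≤ a') (ha3 : a' ≤ ahi)
    (hb1 : blo ≤ b) (hb2 : b ≤ b') (hb3 : b' ≤ bhi) :
    pwF alo ahi blo bhi F00 F10 F01 F11 a' b'
        - pwF alo ahi blo bhi F00 F10 F01 F11 a b'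
        - pwF alo ahi blo bhi F00 F10 F01 F11 a' b
        + pwF alo ahi blo bhi F00 F10 F01 F11 a b
      = ((F11 - F01 - F10 + F00) / (ahi - alo))
          * (MeasureTheory.volume {t : ℝ | t ∈ Set.Icc a a' ∧
              b ≤ diagLine alo ahi blo bhi t ∧ diagLine alo ahi blo bhi t ≤ b'}).toReal := by
  have ha0 : (0:ℝ) < ahi - alo := by linarith
  have hb0 : (0:ℝ) < bhi - blo := by linarith
  set u : ℝ := (a - alo) / (ahi - alo) with hu
  set u' : ℝ := (a' - alo) / (ahi - alo) with hu'
  set v : ℝ := (b - blo) / (bhi - blo) with hv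
  set v' : ℝ := (b' - blo) / (bhi - blo) with hv'
  have huu : u ≤ u' := by rw [hu, hu', div_le_div_iff₀ ha0 ha0]; nlinarith
  have hvv : v ≤ v' := by rw [hv, hv', div_le_div_iff₀ hb0 hb0]; nlinarith
  -- characterize the diagonal conditions
  have hdi : ∀ c t : ℝ, (c ≤ diagLine alo ahi blo bhi t)
      ↔ alo + ((c - blo) / (bhi - blo)) * (ahi - alo) ≤ t := by
    intro c t
    unfold diagLine
    constructor
    · intro h
      have h1 : c - blo ≤ (bhi - blo) * (t - alo) / (ahi - alo) := by linarith
      rw [le_div_iff₀ ha0] at h1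
      have h2 : ((c - blo) / (bhi - blo)) * (ahi - alo) ≤ t - alo := by
        rw [div_mul_eq_mul_div, div_le_iff₀ hb0]; nlinarith
      linarith
    · intro h
      have h2 : ((c - blo) / (bhi - blo)) * (ahi - alo) ≤ t - alo := by linarith
      rw [div_mul_eq_mul_div, div_le_iff₀ hb0] at h2
      have h1 : c - blo ≤ (bhi - blo) * (t - alo) / (ahi - alo) := by
        rw [le_div_iff₀ ha0]; nlinarith
      linarith
  have hdi2 : ∀ c t : ℝ, (diagLine alo ahi blo bhi t ≤ c)
      ↔ t ≤ alo + ((c - blo) / (bhi - blo)) * (ahi - alo) := by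
    intro c t
    unfold diagLine
    constructor
    · intro h
      have h1 : (bhi - blo) * (t - alo) / (ahi - alo) ≤ c - blo := by linarith
      rw [div_le_iff₀ ha0] at h1
      have h2 : t - alo ≤ ((c - blo) / (bhi - blo)) * (ahi - alo) := by
        rw [div_mul_eq_mul_div, le_div_iff₀ hb0]; nlinarith
      linarith
    · intro h
      have h2 : t - alo ≤ ((c - blo) / (bhi - blo)) * (ahi - alo) := by linarith
      rw [div_mul_eq_mul_div, le_div_iff₀ hb0] at h2
      have h1 : (bhi - blo) * (t - alo) / (ahi - alo) ≤ c - blo := by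
        rw [div_le_iff₀ ha0]; nlinarith
      linarith
  have hset : {t : ℝ | t ∈ Set.Icc a a' ∧
        b ≤ diagLine alo ahi blo bhi t ∧ diagLine alo ahi blo bhi t ≤ b'}
      = Set.Icc (max a (alo + v * (ahi - alo))) (min a' (alo + v' * (ahi - alo))) := by
    ext t
    simp only [Set.mem_setOf_eq, Set.mem_Icc, hdi, hdi2, max_le_iff, le_min_iff, ← hv, ← hv']
    tauto
  rw [hset, Real.volume_Icc, ENNReal.toReal_ofReal']
  have ea : a = alo + u * (ahi - alo) := by rw [hu]; field_simp; ring
  have ea' : a' = alo + u' * (ahi - alo) := by rw [hu']; field_simp; ring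
  have key : min a' (alo + v' * (ahi - alo)) - max a (alo + v * (ahi - alo))
      = (min u' v' - max u v) * (ahi - alo) := by
    rw [ea, ea']
    simp only [min_def, max_def, add_le_add_iff_left, mul_le_mul_iff_of_pos_right ha0]
    split_ifs <;> ring
  rw [key]
  have hmm : ∀ M : ℝ, (F11 - F01 - F10 + F00) / (ahi - alo) * max (M * (ahi - alo)) 0
      = (F11 - F01 - F10 + F00) * max M 0 := by
    intro M
    rcases le_total M 0 with h | h
    · rw [max_eq_right (by nlinarith), max_eq_right h, mul_zero, mul_zero]
    · rw [max_eq_left (by nlinarith), max_eq_left h]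
      field_simp
  rw [hmm, ← minmax4 u u' v v' huu hvv,
    pwF_eq alo ahi blo bhi F00 F10 F01 F11 a' b' ha hb,
    pwF_eq alo ahi blo bhi F00 F10 F01 F11 a b' ha hb,
    pwF_eq alo ahi blo bhi F00 F10 F01 F11 a' b ha hb,
    pwF_eq alo ahi blo bhi F00 F10 F01 F11 a b ha hb, ← hu, ← hu', ← hv, ← hv']
  ring


end
end

section
/- (Hoffman's lemma for a linear inequality system under a seminorm pseudo-metric.) Let E be a real vector space, p : E → ℝ a seminorm, 𝒮 ⊆ E a convex set, Ψ : E → ℝ^M a linear map, and C ∈ ℝ^M. Define U := {u ∈ 𝒮 : Ψ(u)_l ≤ C_l for l = 1,…,M}. Suppose there exist α > 0 and u⁰ ∈ U such that Ψ(u⁰)_l ≤ C_l − α for every l = 1,…,M (Slater condition). Then for every u ∈ 𝒮, inf_{v ∈ U} p(u − v) ≤ (p(u − u⁰)/α) · ‖(Ψ(u) − C)₊‖, where (a)₊ denotes the componentwise positive part max{0,a} and ‖·‖ is the Euclidean norm on ℝ^M. -/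
open Finset

/-- Hoffman's lemma for a linear inequality system under a seminorm pseudo-metric (Lemma 5.1 of
the paper): under the Slater condition, the seminorm distance of any `u ∈ 𝒮` to the solution
set `U` is bounded by `p (u - u⁰) / α` times the Euclidean norm of the residual `(Ψ u − C)₊`. -/
theorem hoffman_lemma_seminorm
    {E : Type*} [AddCommGroup E] [Module ℝ E]
    (p : Seminorm ℝ E) (S : Set E) (hS : Convex ℝ S)
    (M : ℕ) (Ψ : E →ₗ[ℝ] (Fin M → ℝ)) (C : Fin M → ℝ)
    (α : ℝ) (hα : 0 < α) (u0 : E) (hu0S : u0 ∈ S)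
    (hSlater : ∀ l, Ψ u0 l ≤ C l - α) :
    ∀ u ∈ S,
      (⨅ v : {v : E // v ∈ S ∧ ∀ l, Ψ v l ≤ C l}, p (u - (v : E)))
        ≤ (p (u - u0) / α) * Real.sqrt (∑ l, max (Ψ u l - C l) 0 ^ 2) := by
  intro u huS
  set β : ℝ := Real.sqrt (∑ l, max (Ψ u l - C l) 0 ^ 2) with hβdef
  have hβ0 : 0 ≤ β := Real.sqrt_nonneg _
  have hβge : ∀ l, Ψ u l - C l ≤ β := by
    intro l
    have h1 : max (Ψ u l - C l) 0 ^ 2 ≤ ∑ j, max (Ψ u j - C j) 0 ^ 2 :=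
      Finset.single_le_sum (f := fun j => max (Ψ u j - C j) 0 ^ 2)
        (fun j _ => sq_nonneg _) (Finset.mem_univ l)
    have h2 : max (Ψ u l - C l) 0 ≤ β := by
      rw [hβdef]
      calc max (Ψ u l - C l) 0 = Real.sqrt (max (Ψ u l - C l) 0 ^ 2) :=
            (Real.sqrt_sq (le_max_right _ _)).symm
        _ ≤ _ := Real.sqrt_le_sqrt h1
    exact le_trans (le_max_left _ _) h2
  set t : ℝ := β / (α + β) with htdef
  have hαβ : 0 < α + β := by linarith
  have ht0 : 0 ≤ t := div_nonneg hβ0 hαβ.le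
  have ht1 : t ≤ 1 := by
    rw [htdef, div_le_one hαβ]; linarith
  set v : E := (1 - t) • u + t • u0 with hvdef
  have hvS : v ∈ S := hS huS hu0S (by linarith) ht0 (by ring)
  have hvC : ∀ l, Ψ v l ≤ C l := by
    intro l
    have : Ψ v l = (1 - t) * Ψ u l + t * Ψ u0 l := by
      simp [hvdef, map_add, map_smul]
    rw [this]
    have h1 : Ψ u l ≤ C l + β := by linarith [hβge l]
    have h2 : Ψ u0 l ≤ C l - α := hSlater l
    have ht : t * (α + β) = β := by
      rw [htdef]; field_simp
    nlinarith [mul_le_mul_of_nonneg_left h1 (by linarith : (0:ℝ) ≤ 1 - t),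
      mul_le_mul_of_nonneg_left h2 ht0]
  have huv : u - v = t • (u - u0) := by
    rw [hvdef]
    module
  have hpv : p (u - v) = t * p (u - u0) := by
    rw [huv, map_smul_eq_mul, Real.norm_eq_abs, abs_of_nonneg ht0]
  have key : p (u - v) ≤ p (u - u0) / α * β := by
    rw [hpv, htdef, div_mul_eq_mul_div, div_mul_eq_mul_div]
    rw [div_le_div_iff₀ hαβ hα]
    have hp0 : 0 ≤ p (u - u0) := apply_nonneg p _
    nlinarith [mul_nonneg hp0 hβ0]
  refine le_trans (ciInf_le_of_le ?_ ⟨v, hvS, hvC⟩ le_rfl) key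
  exact ⟨0, by rintro x ⟨w, rfl⟩; exact apply_nonneg p _⟩
end

section
/- Let L > 0 and let u : T → ℝ be Lipschitz with modulus L with respect to the ℓ¹-norm, i.e., |u(x,y) − u(x′,y′)| ≤ L(|x−x′| + |y−y′|) for all (x,y),(x′,y′) ∈ T. Let u_N be the Type-1 piecewise linear function built from the grid values u_{i,j} := u(x_i,y_j). Then |u_N(x,y) − u(x,y)| ≤ L(β₁ + β₂) for every (x,y) ∈ T, where β₁ := max_{1≤i≤N₁−1}(x_{i+1}−x_i) and β₂ := max_{1≤j≤N₂−1}(y_{j+1}−y_j) are the mesh sizes. (This uniform bound is the key step, inequality (A.6), in the proof of Proposition 5.1(ii) of the paper.) -/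
open Finset Set
open scoped Classical

noncomputable section

lemma x_mono {N : ℕ} {x : ℕ → ℝ} (hx : ∀ i, 1 ≤ i → i < N → x i < x (i + 1)) :
    ∀ a b, 1 ≤ a → a ≤ b → b ≤ N → x a ≤ x b := by
  intro a b ha hab hbN
  induction b with
  | zero => omega
  | succ n ih =>
    rcases eq_or_lt_of_le hab with rfl | h
    · exact le_refl _
    · have h1 : x a ≤ x n := ih (by omega) (by omega)
      exact h1.trans (le_of_lt (hx n (by omega) (by omega)))

lemma memX_bounds {x : ℕ → ℝ} {i : ℕ} {p : ℝ} (h : memX x i p) :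
    x i ≤ p ∧ p ≤ x (i + 1) := by
  unfold memX at h
  split at h
  · rename_i h1; subst h1; exact ⟨h.1, h.2⟩
  · exact ⟨h.1.le, h.2⟩

lemma exists_memX {N : ℕ} (hN : 2 ≤ N) {x : ℕ → ℝ} {p : ℝ}
    (hp : x 1 ≤ p) (hp' : p ≤ x N) :
    ∃ i, i ∈ Finset.Icc 1 (N - 1) ∧ memX x i p := by
  classical
  set S := (Finset.Icc 1 (N - 1)).filter (fun i => p ≤ x (i + 1)) with hS
  have hNe : S.Nonempty := by
    refine ⟨N - 1, ?_⟩
    simp only [hS, Finset.mem_filter, Finset.mem_Icc]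
    have hEq : N - 1 + 1 = N := by omega
    rw [hEq]
    exact ⟨⟨by omega, le_refl _⟩, hp'⟩
  set i := S.min' hNe with hi
  have hiS : i ∈ S := S.min'_mem hNe
  simp only [hS, Finset.mem_filter, Finset.mem_Icc] at hiS
  refine ⟨i, Finset.mem_Icc.mpr hiS.1, ?_⟩
  unfold memX
  split
  · rename_i h1
    rw [h1] at hiS
    exact ⟨hp, by simpa using hiS.2⟩
  · rename_i h1
    refine ⟨?_, hiS.2⟩
    by_contra hcon
    push_neg at hcon
    have hmem : i - 1 ∈ S := by
      simp only [hS, Finset.mem_filter, Finset.mem_Icc]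
      have hEq : i - 1 + 1 = i := by omega
      rw [hEq]
      exact ⟨⟨by omega, by omega⟩, hcon⟩
    have := S.min'_le _ hmem
    omega

lemma memX_unique_s12 {N : ℕ} {x : ℕ → ℝ} (hx : ∀ i, 1 ≤ i → i < N → x i < x (i + 1))
    {p : ℝ} {a b : ℕ} (ha : a ∈ Finset.Icc 1 (N - 1)) (hb : b ∈ Finset.Icc 1 (N - 1))
    (hpa : memX x a p) (hpb : memX x b p) : a = b := by
  simp only [Finset.mem_Icc] at ha hb
  have key : ∀ c d : ℕ, 1 ≤ c → c ≤ N - 1 → 1 ≤ d → d ≤ N - 1 → c < d →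
      memX x c p → memX x d p → False := by
    intro c d hc1 hc2 hd1 hd2 hcd hpc hpd
    have h1 : p ≤ x (c + 1) := (memX_bounds hpc).2
    have h2 : x d < p := by
      unfold memX at hpd
      rw [if_neg (by omega)] at hpd
      exact hpd.1
    have h3 : x (c + 1) ≤ x d := x_mono hx (c + 1) d (by omega) (by omega) (by omega)
    linarith
  rcases lt_trichotomy a b with h | h | h
  · exact absurd (key a b ha.1 ha.2 hb.1 hb.2 h hpa hpb) not_false
  · exact h
  · exact absurd (key b a hb.1 hb.2 ha.1 ha.2 h hpb hpa) not_false

lemma affine_bound {a b c v0 v1 v2 w M : ℝ} (ha : 0 ≤ a) (hb : 0 ≤ b) (hc : 0 ≤ c)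
    (habc : a + b + c = 1) (h0 : |v0 - w| ≤ M) (h1 : |v1 - w| ≤ M) (h2 : |v2 - w| ≤ M) :
    |a * v0 + b * v1 + c * v2 - w| ≤ M := by
  rw [abs_le] at h0 h1 h2 ⊢
  have hM : a * M + b * M + c * M = M := by
    rw [show a * M + b * M + c * M = (a + b + c) * M by ring, habc, one_mul]
  have hw : a * w + b * w + c * w = w := by
    rw [show a * w + b * w + c * w = (a + b + c) * w by ring, habc, one_mul]
  constructor <;>
    nlinarith [mul_le_mul_of_nonneg_left h0.2 ha, mul_le_mul_of_nonneg_left h0.1 ha,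
      mul_le_mul_of_nonneg_left h1.2 hb, mul_le_mul_of_nonneg_left h1.1 hb,
      mul_le_mul_of_nonneg_left h2.2 hc, mul_le_mul_of_nonneg_left h2.1 hc]

/-- Uniform error bound for the Type-1 piecewise linear approximation of an ℓ¹-Lipschitz
function: `|u_N − u| ≤ L (β₁ + β₂)` on `T`, where `β₁, β₂` are the mesh sizes
(inequality (A.6) in the proof of Proposition 5.1(ii)). -/
theorem type1_PLA_uniform_error_bound
    (N₁ N₂ : ℕ) (hN₁ : 2 ≤ N₁) (hN₂ : 2 ≤ N₂)
    (x y : ℕ → ℝ)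
    (hx : ∀ i, 1 ≤ i → i < N₁ → x i < x (i + 1))
    (hy : ∀ j, 1 ≤ j → j < N₂ → y j < y (j + 1))
    (L : ℝ) (hL : 0 < L)
    (u : ℝ → ℝ → ℝ)
    (hlip : ∀ p p' q q', p ∈ Set.Icc (x 1) (x N₁) → p' ∈ Set.Icc (x 1) (x N₁) →
      q ∈ Set.Icc (y 1) (y N₂) → q' ∈ Set.Icc (y 1) (y N₂) →
      |u p q - u p' q'| ≤ L * (|p - p'| + |q - q'|)) :
    let β₁ := (Finset.Icc 1 (N₁ - 1)).sup' (Finset.nonempty_Icc.mpr (by omega))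
      (fun i => x (i + 1) - x i)
    let β₂ := (Finset.Icc 1 (N₂ - 1)).sup' (Finset.nonempty_Icc.mpr (by omega))
      (fun j => y (j + 1) - y j)
    ∀ p ∈ Set.Icc (x 1) (x N₁), ∀ q ∈ Set.Icc (y 1) (y N₂),
      |uPL N₁ N₂ x y (fun i j => u (x i) (y j)) p q - u p q| ≤ L * (β₁ + β₂) := by
  intro β₁ β₂ p hp q hq
  obtain ⟨hp1, hp2⟩ := hp
  obtain ⟨hq1, hq2⟩ := hq
  obtain ⟨i, hi, hXi⟩ := exists_memX hN₁ hp1 hp2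
  obtain ⟨j, hj, hYj⟩ := exists_memX hN₂ hq1 hq2
  have hiIcc := Finset.mem_Icc.mp hi
  have hjIcc := Finset.mem_Icc.mp hj
  have hxp := memX_bounds hXi
  have hyq := memX_bounds hYj
  have hh : (0:ℝ) < x (i + 1) - x i := sub_pos.mpr (hx i (by omega) (by omega))
  have hk : (0:ℝ) < y (j + 1) - y j := sub_pos.mpr (hy j (by omega) (by omega))
  have hβ1 : x (i + 1) - x i ≤ β₁ := Finset.le_sup' (fun i => x (i + 1) - x i) hi
  have hβ2 : y (j + 1) - y j ≤ β₂ := Finset.le_sup' (fun j => y (j + 1) - y j) hj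
  -- collapse the double sum
  have hcollapse : uPL N₁ N₂ x y (fun i j => u (x i) (y j)) p q =
      (if (q - y j) * (x (i + 1) - x i) ≤ (p - x i) * (y (j + 1) - y j)
        then u1l x y (fun i j => u (x i) (y j)) i j p q
        else u1u x y (fun i j => u (x i) (y j)) i j p q) := by
    unfold uPL
    rw [Finset.sum_eq_single_of_mem i hi ?_]
    · rw [Finset.sum_eq_single_of_mem j hj ?_]
      · rw [if_pos ⟨hXi, hYj⟩]
      · intro b hb hbj
        rw [if_neg]
        intro hcell
        exact hbj (memX_unique_s12 hy hb hj hcell.2 hYj)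
    · intro b hb hbi
      refine Finset.sum_eq_zero fun c _ => ?_
      rw [if_neg]
      intro hcell
      exact hbi (memX_unique_s12 hx hb hi hcell.1 hXi)
  rw [hcollapse]
  -- bound on vertex values
  have vb : ∀ i' j', 1 ≤ i' → i' ≤ N₁ → 1 ≤ j' → j' ≤ N₂ →
      |x i' - p| ≤ x (i + 1) - x i → |y j' - q| ≤ y (j + 1) - y j →
      |u (x i') (y j') - u p q| ≤ L * (β₁ + β₂) := by
    intro i' j' h1 h2 h3 h4 h5 h6
    have hxlo : x 1 ≤ x i' := x_mono hx 1 i' le_rfl h1 h2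
    have hxhi : x i' ≤ x N₁ := x_mono hx i' N₁ h1 h2 le_rfl
    have hylo : y 1 ≤ y j' := x_mono hy 1 j' le_rfl h3 h4
    have hyhi : y j' ≤ y N₂ := x_mono hy j' N₂ h3 h4 le_rfl
    have hL2 := hlip (x i') p (y j') q ⟨hxlo, hxhi⟩ ⟨hp1, hp2⟩ ⟨hylo, hyhi⟩ ⟨hq1, hq2⟩
    refine hL2.trans ?_
    have : |x i' - p| + |y j' - q| ≤ β₁ + β₂ := by linarith
    nlinarith [abs_nonneg (x i' - p), abs_nonneg (y j' - q)]
  have habs1 : |x i - p| ≤ x (i + 1) - x i := abs_le.mpr ⟨by linarith [hxp.1, hxp.2], by linarith [hxp.1]⟩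
  have habs2 : |x (i + 1) - p| ≤ x (i + 1) - x i := abs_le.mpr ⟨by linarith [hxp.2], by linarith [hxp.1]⟩
  have habs3 : |y j - q| ≤ y (j + 1) - y j := abs_le.mpr ⟨by linarith [hyq.1, hyq.2], by linarith [hyq.1]⟩
  have habs4 : |y (j + 1) - q| ≤ y (j + 1) - y j := abs_le.mpr ⟨by linarith [hyq.2], by linarith [hyq.1]⟩
  split
  · rename_i hcond
    unfold u1l
    simp only
    refine affine_bound ?_ ?_ ?_ ?_ ?_ ?_ ?_
    · exact div_nonneg (by linarith [hxp.2]) hh.le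
    · have := (div_le_div_iff₀ hk hh).mpr hcond
      linarith
    · exact div_nonneg (by linarith [hyq.1]) hk.le
    · field_simp; ring
    · exact vb i j (by omega) (by omega) (by omega) (by omega) habs1 habs3
    · exact vb (i + 1) j (by omega) (by omega) (by omega) (by omega) habs2 habs3
    · exact vb (i + 1) (j + 1) (by omega) (by omega) (by omega) (by omega) habs2 habs4
  · rename_i hcond
    push_neg at hcond
    unfold u1u
    simp only
    refine affine_bound ?_ ?_ ?_ ?_ ?_ ?_ ?_
    · exact div_nonneg (by linarith [hyq.2]) hk.le
    · have := (div_le_div_iff₀ hh hk).mpr hcond.le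
      linarith
    · exact div_nonneg (by linarith [hxp.1]) hh.le
    · field_simp; ring
    · exact vb i j (by omega) (by omega) (by omega) (by omega) habs1 habs3
    · exact vb i (j + 1) (by omega) (by omega) (by omega) (by omega) habs1 habs4
    · exact vb (i + 1) (j + 1) (by omega) (by omega) (by omega) (by omega) habs2 habs4

end
end
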